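/- arXiv:1803.08472 — 3 statements merged into one kernel-verified Lean document; each statement's English description precedes it below -/
import Mathlib

section
/- Let {0} ≠ U ⊆ V be a nonzero subspace of V spanned by a subset of Φ, and set Φ_U := Φ ∩ U, a sub-root system of Φ. Let π_U : V → U denote the orthogonal projection of V onto U. Then there exists some κ with 1 ≤ κ < 2 such that π_U(𝒫_Φ) ⊆ κ·𝒫_{Φ_U}, where 𝒫_Φ := ConvexHull(Φ) and 𝒫_{Φ_U} := ConvexHull(Φ_U) are the root polytopes. -/
open RealInnerProductSpace Pointwise

/-- The covector `α^∨ := 2α/⟨α,α⟩` of a vector `α`. -/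
noncomputable def corootOf {V : Type*} [NormedAddCommGroup V] [InnerProductSpace ℝ V]
    (α : V) : V := (2 / ⟪α, α⟫) • α

/-- The reflection `s_α(u) := u - ⟨u,α^∨⟩α`. -/
noncomputable def rsReflect {V : Type*} [NormedAddCommGroup V] [InnerProductSpace ℝ V]
    (α u : V) : V := u - ⟪u, corootOf α⟫ • α

/-- An irreducible crystallographic reduced root system in a Euclidean space `V`,
together with a chosen base `α_1, …, α_n` of simple roots. -/
structure RootSystemData (V : Type*) [NormedAddCommGroup V] [InnerProductSpace ℝ V]
    (n : ℕ) where
  Φ : Set V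
  finite : Φ.Finite
  nonzero : ∀ α ∈ Φ, α ≠ 0
  spans : Submodule.span ℝ Φ = ⊤
  reflect_mem : ∀ α ∈ Φ, ∀ β ∈ Φ, rsReflect α β ∈ Φ
  reduced : ∀ α ∈ Φ, (Submodule.span ℝ {α} : Set V) ∩ Φ = {α, -α}
  crystal : ∀ α ∈ Φ, ∀ β ∈ Φ, ∃ z : ℤ, ⟪β, corootOf α⟫ = (z : ℝ)
  irred : ¬∃ Φ₁ Φ₂ : Set V, Φ₁.Nonempty ∧ Φ₂.Nonempty ∧ Φ₁ ∪ Φ₂ = Φ ∧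
    Disjoint Φ₁ Φ₂ ∧ ∀ α ∈ Φ₁, ∀ β ∈ Φ₂, ⟪α, β⟫ = 0
  simple : Fin n → V
  simple_mem : ∀ i, simple i ∈ Φ
  simple_indep : LinearIndependent ℝ simple
  simple_span : Submodule.span ℝ (Set.range simple) = ⊤
  root_combo : ∀ α ∈ Φ, (∃ c : Fin n → ℕ, α = ∑ i, (c i : ℝ) • simple i) ∨
    (∃ c : Fin n → ℕ, α = -∑ i, (c i : ℝ) • simple i)

namespace RootSystemData

variable {V : Type*} [NormedAddCommGroup V] [InnerProductSpace ℝ V] {n : ℕ}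

/-- The set `Φ^+` of positive roots. -/
def Pos (R : RootSystemData V n) : Set V :=
  {α | α ∈ R.Φ ∧ ∃ c : Fin n → ℕ, α = ∑ i, (c i : ℝ) • R.simple i}

/-- The Weyl group `W`, as the subgroup of linear automorphisms of `V` generated by
the reflections `s_α`, `α ∈ Φ`. -/
def weyl (R : RootSystemData V n) : Subgroup (V ≃ₗ[ℝ] V) :=
  Subgroup.closure {w | ∃ α ∈ R.Φ, ∀ u, w u = rsReflect α u}

/-- The Weyl group orbit `W(l)`. -/
def orbit (R : RootSystemData V n) (l : V) : Set V := {v | ∃ w ∈ R.weyl, v = w l}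

/-- The permutohedron `Π(l) := ConvexHull W(l)`. -/
noncomputable def perm (R : RootSystemData V n) (l : V) : Set V := convexHull ℝ (R.orbit l)

/-- The root lattice `Q := Span_ℤ(Φ)`. -/
def rootLattice (R : RootSystemData V n) : AddSubgroup V := AddSubgroup.closure R.Φ

/-- The coset `Q + l`. -/
def latticeCoset (R : RootSystemData V n) (l : V) : Set V := {v | v - l ∈ R.rootLattice}

/-- The discrete permutohedron `Π^Q(l) := Π(l) ∩ (Q + l)`. -/
noncomputable def permQ (R : RootSystemData V n) (l : V) : Set V :=
  R.perm l ∩ R.latticeCoset l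

/-- The weight lattice `P`. -/
def weights (R : RootSystemData V n) : Set V :=
  {v | ∀ α ∈ R.Φ, ∃ z : ℤ, ⟪v, corootOf α⟫ = (z : ℝ)}

/-- A vector is dominant if it pairs nonnegatively with all simple coroots. -/
def IsDomVec (R : RootSystemData V n) (v : V) : Prop :=
  ∀ i, 0 ≤ ⟪v, corootOf (R.simple i)⟫

/-- Dominant weights, i.e. elements of `P_{≥0}`. -/
def IsDominant (R : RootSystemData V n) (l : V) : Prop :=
  l ∈ R.weights ∧ R.IsDomVec l

/-- Root order: `μ ≤ l` iff `l − μ` is a nonnegative integer combination of simple roots. -/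
def rootOrderLE (R : RootSystemData V n) (μ l : V) : Prop :=
  ∃ c : Fin n → ℕ, l - μ = ∑ i, (c i : ℝ) • R.simple i

/-- Membership in `ℕ[Φ]^W`: `W`-invariance of `k : Φ → ℕ`. -/
def IsWInvariant (R : RootSystemData V n) (k : V → ℕ) : Prop :=
  ∀ w ∈ R.weyl, ∀ α ∈ R.Φ, k (w α) = k α

/-- Short roots: minimizers of the squared length. -/
def IsShort (R : RootSystemData V n) (α : V) : Prop :=
  α ∈ R.Φ ∧ ∀ β ∈ R.Φ, ⟪α, α⟫ ≤ ⟪β, β⟫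

/-- Long roots: maximizers of the squared length. -/
def IsLong (R : RootSystemData V n) (α : V) : Prop :=
  α ∈ R.Φ ∧ ∀ β ∈ R.Φ, ⟪β, β⟫ ≤ ⟪α, α⟫

/-- Simply laced: all roots have the same length. -/
def IsSimplyLaced (R : RootSystemData V n) : Prop :=
  ∀ α ∈ R.Φ, ∀ β ∈ R.Φ, ⟪α, α⟫ = ⟪β, β⟫

/-- `k ∈ ℕ[Φ]^W` is good if `Φ` is simply laced, or else `k` vanishing on short roots
implies it vanishes on long roots. -/
def IsGood (R : RootSystemData V n) (k : V → ℕ) : Prop :=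
  R.IsSimplyLaced ∨ ((∀ α, R.IsShort α → k α = 0) → ∀ α, R.IsLong α → k α = 0)

/-- The symmetric interval-firing relation: `l → l + α` whenever
`⟨l + α/2, α^∨⟩ ∈ {−k(α), …, k(α)}`. -/
def symFire (R : RootSystemData V n) (k : V → ℕ) (l m : V) : Prop :=
  ∃ α ∈ R.Pos, m = l + α ∧ ∃ z : ℤ,
    ⟪l + (2⁻¹ : ℝ) • α, corootOf α⟫ = (z : ℝ) ∧ -(k α : ℤ) ≤ z ∧ z ≤ (k α : ℤ)

/-- `ν` is the stabilization of `μ` for the symmetric interval-firing process. -/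
def symStab (R : RootSystemData V n) (k : V → ℕ) (μ ν : V) : Prop :=
  Relation.ReflTransGen (R.symFire k) μ ν ∧ ∀ ξ, ¬ R.symFire k ν ξ

/-- The length of a Weyl group element: its number of inversions. -/
noncomputable def len (R : RootSystemData V n) (w : V ≃ₗ[ℝ] V) : ℕ :=
  {α | α ∈ R.Pos ∧ w α ∉ R.Pos}.ncard

/-- `w` is the minimal length element of `W` such that `w⁻¹(l)` is dominant
(i.e. `w = w_l`). -/
def IsMinDomRep (R : RootSystemData V n) (l : V) (w : V ≃ₗ[ℝ] V) : Prop :=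
  w ∈ R.weyl ∧ R.IsDomVec (w⁻¹ l) ∧
    ∀ w' ∈ R.weyl, R.IsDomVec (w'⁻¹ l) → R.len w ≤ R.len w'

/-- The fiber `(s^sym_𝐤)⁻¹(l)`: the set of weights whose symmetric interval-firing
stabilization is `η_𝐤(l) = l + w_l(ρ_𝐤)`.  Here `ρk` is the vector `ρ_𝐤`. -/
def symFiber (R : RootSystemData V n) (k : V → ℕ) (ρk : V) (l : V) : Set V :=
  {μ | μ ∈ R.weights ∧ ∃ w, R.IsMinDomRep l w ∧ R.symStab k μ (l + w ρk)}

/-- The symmetric Ehrhart-like count `L^sym_l(𝐤)`. -/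
noncomputable def symL (R : RootSystemData V n) (k : V → ℕ) (ρk : V) (l : V) : ℕ :=
  (R.symFiber k ρk l).ncard

/-- `I^{0,1}_l := {i : ⟨l, α_i^∨⟩ ∈ {0,1}}`. -/
def I01 (R : RootSystemData V n) (l : V) : Set (Fin n) :=
  {i | ⟪l, corootOf (R.simple i)⟫ = 0 ∨ ⟪l, corootOf (R.simple i)⟫ = 1}

/-- The parabolic subgroup `W_I`. -/
def parabolic (R : RootSystemData V n) (I : Set (Fin n)) : Subgroup (V ≃ₗ[ℝ] V) :=
  Subgroup.closure {w | ∃ i ∈ I, ∀ u, w u = rsReflect (R.simple i) u}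

/-- The parabolic sub-root system `Φ_I := Φ ∩ Span_ℝ{α_i : i ∈ I}`. -/
def parabolicRoots (R : RootSystemData V n) (I : Set (Fin n)) : Set V :=
  R.Φ ∩ (Submodule.span ℝ (R.simple '' I) : Set V)

/-- The set `W^I` of minimal length representatives of the cosets of `W_I` in `W`. -/
noncomputable def minReps (R : RootSystemData V n) (I : Set (Fin n)) : Set (V ≃ₗ[ℝ] V) :=
  {w | w ∈ R.weyl ∧ ∀ w' ∈ R.weyl, w⁻¹ * w' ∈ R.parabolic I → R.len w ≤ R.len w'}

end RootSystemData

/-- The relative volume `rVol_Λ(X)` of a finite (linearly independent) set `X` with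
respect to a lattice `Λ`: the number of `Λ`-points in the half-open parallelepiped
`Σ_{x ∈ X} [0, x)` (equivalently, the gcd of the maximal minors of the matrix
expressing the elements of `X` in a basis of `Λ`). -/
noncomputable def rVol {V : Type*} [AddCommGroup V] [Module ℝ V]
    (Λ : AddSubgroup V) (X : Finset V) : ℕ :=
  {v : V | v ∈ Λ ∧ ∃ c : V → ℝ, (∀ x ∈ X, 0 ≤ c x ∧ c x < 1) ∧
    v = ∑ x ∈ X, c x • x}.ncard


/-! ### Auxiliary material for the proof of the projection-dilation theorem -/

section RPPDAux

open Finset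

variable {V : Type*} [NormedAddCommGroup V] [InnerProductSpace ℝ V]

private lemma rppd_inner_self_pos {x : V} (hx : x ≠ 0) : 0 < ⟪x, x⟫ :=
  lt_of_le_of_ne real_inner_self_nonneg (fun h => hx (inner_self_eq_zero.mp h.symm))

/-- A vector pairing nontrivially with every member of a finite set of nonzero vectors. -/
private lemma rppd_exists_generic (D : Finset V) (hD : ∀ β ∈ D, β ≠ (0 : V)) :
    ∃ ζ : V, ∀ β ∈ D, ⟪ζ, β⟫ ≠ 0 := by
  classical
  induction D using Finset.induction_on with
  | empty => exact ⟨0, by simp⟩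
  | @insert β₀ s hβ₀s IH =>
    obtain ⟨ζ, hζ⟩ := IH (fun β hβ => hD β (Finset.mem_insert_of_mem hβ))
    have hβ₀ : β₀ ≠ 0 := hD β₀ (Finset.mem_insert_self _ _)
    have hfin : (⋃ γ ∈ (insert β₀ s : Finset V),
        {t : ℝ | ⟪ζ, γ⟫ + t * ⟪β₀, γ⟫ = 0 ∧ ⟪β₀, γ⟫ ≠ 0}).Finite := by
      apply Set.Finite.biUnion (Finset.finite_toSet _)
      intro γ _
      by_cases hg : ⟪β₀, γ⟫ = 0
      · have : {t : ℝ | ⟪ζ, γ⟫ + t * ⟪β₀, γ⟫ = 0 ∧ ⟪β₀, γ⟫ ≠ 0} = ∅ := by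
          ext t; simp [hg]
        rw [this]; exact Set.finite_empty
      · apply Set.Finite.subset (Set.finite_singleton (-⟪ζ, γ⟫ / ⟪β₀, γ⟫))
        rintro t ⟨ht, -⟩
        rw [Set.mem_singleton_iff, eq_div_iff hg]
        linarith
    obtain ⟨t, ht⟩ := hfin.infinite_compl.nonempty
    refine ⟨ζ + t • β₀, ?_⟩
    intro γ hγ
    have hval : ⟪ζ + t • β₀, γ⟫ = ⟪ζ, γ⟫ + t * ⟪β₀, γ⟫ := by
      rw [inner_add_left, real_inner_smul_left]
    rw [hval]
    by_cases hg : ⟪β₀, γ⟫ = 0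
    · rcases Finset.mem_insert.1 hγ with rfl | hγs
      · exact absurd (inner_self_eq_zero.1 hg) hβ₀
      · simpa [hg] using hζ γ hγs
    · intro h0
      exact ht (Set.mem_biUnion (Finset.mem_coe.2 hγ) ⟨h0, hg⟩)

/-- The support function of a finite set of vectors. -/
private noncomputable def supInner (Q : Finset V) (hQ : Q.Nonempty) (u : V) : ℝ :=
  Q.sup' hQ fun β => ⟪β, u⟫

private lemma le_supInner {Q : Finset V} (hQ : Q.Nonempty) {β u : V} (hβ : β ∈ Q) :
    ⟪β, u⟫ ≤ supInner Q hQ u := by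
  unfold supInner; exact Finset.le_sup' (fun β => ⟪β, u⟫) hβ

private lemma supInner_lt {Q : Finset V} (hQ : Q.Nonempty) {u : V} {t : ℝ}
    (h : ∀ β ∈ Q, ⟪β, u⟫ < t) : supInner Q hQ u < t := by
  unfold supInner; exact (Finset.sup'_lt_iff hQ).2 h

private lemma exists_eq_supInner {Q : Finset V} (hQ : Q.Nonempty) (u : V) :
    ∃ β ∈ Q, supInner Q hQ u = ⟪β, u⟫ := by
  unfold supInner; exact Finset.exists_mem_eq_sup' hQ _

private lemma supInner_zero {Q : Finset V} (hQ : Q.Nonempty) : supInner Q hQ (0 : V) = 0 := by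
  simp [supInner]

private lemma supInner_smul {Q : Finset V} (hQ : Q.Nonempty) {c : ℝ} (hc : 0 ≤ c) (u : V) :
    supInner Q hQ (c • u) = c * supInner Q hQ u := by
  rcases hc.eq_or_lt with rfl | hc
  · simp [supInner_zero hQ]
  · apply le_antisymm
    · apply (Finset.sup'_le_iff hQ _).2
      intro β hβ
      rw [real_inner_smul_right]
      exact mul_le_mul_of_nonneg_left (le_supInner hQ hβ) hc.le
    · have h1 : supInner Q hQ u ≤ c⁻¹ * supInner Q hQ (c • u) := by
        apply (Finset.sup'_le_iff hQ _).2
        intro β hβ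
        have h2 := le_supInner (u := c • u) hQ hβ
        rw [real_inner_smul_right] at h2
        rw [le_inv_mul_iff₀ hc]
        exact h2
      calc c * supInner Q hQ u ≤ c * (c⁻¹ * supInner Q hQ (c • u)) :=
            mul_le_mul_of_nonneg_left h1 hc.le
        _ = supInner Q hQ (c • u) := by field_simp

private lemma continuous_supInner (Q : Finset V) :
    ∀ (hQ : Q.Nonempty), Continuous fun u => supInner Q hQ u := by
  classical
  induction Q using Finset.cons_induction with
  | empty => intro h; exact absurd h (by simp)
  | cons a s ha IH =>
    intro h
    rcases s.eq_empty_or_nonempty with rfl | hs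
    · have : (fun u => supInner (Finset.cons a ∅ ha) h u) = fun u => ⟪a, u⟫ := by
        funext u; simp [supInner]
      rw [this]
      exact Continuous.inner continuous_const continuous_id
    · have : (fun u => supInner (Finset.cons a s ha) h u)
          = fun u => (⟪a, u⟫) ⊔ (supInner s hs u) := by
        funext u
        unfold supInner
        exact Finset.sup'_cons hs _
      rw [this]
      exact Continuous.max (Continuous.inner continuous_const continuous_id) (IH hs)

end RPPDAux

section RPPDRoot

open Finset

variable {V : Type*} [NormedAddCommGroup V] [InnerProductSpace ℝ V] {n : ℕ}

private lemma rppd_neg_mem (R : RootSystemData V n) {α : V} (hα : α ∈ R.Φ) : -α ∈ R.Φ := by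
  have h := R.reduced α hα
  have h2 : -α ∈ ({α, -α} : Set V) := by simp
  rw [← h] at h2
  exact h2.2

private lemma rppd_crystal_int (R : RootSystemData V n) {α β : V}
    (hα : α ∈ R.Φ) (hβ : β ∈ R.Φ) : ∃ z : ℤ, 2 * ⟪β, α⟫ = (z : ℝ) * ⟪α, α⟫ := by
  obtain ⟨z, hz⟩ := R.crystal α hα β hβ
  refine ⟨z, ?_⟩
  have hcα : ⟪α, α⟫ ≠ 0 := (rppd_inner_self_pos (R.nonzero α hα)).ne'
  unfold corootOf at hz
  rw [real_inner_smul_right] at hz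
  field_simp at hz
  linarith

private lemma rppd_reflect_mem (R : RootSystemData V n) {α β : V}
    (hα : α ∈ R.Φ) (hβ : β ∈ R.Φ) (z : ℤ) (hz : 2 * ⟪β, α⟫ = (z : ℝ) * ⟪α, α⟫) :
    β - (z : ℝ) • α ∈ R.Φ := by
  have h := R.reflect_mem α hα β hβ
  unfold rsReflect corootOf at h
  rw [real_inner_smul_right] at h
  have hcα : ⟪α, α⟫ ≠ 0 := (rppd_inner_self_pos (R.nonzero α hα)).ne'
  have hco : 2 / ⟪α, α⟫ * ⟪β, α⟫ = (z : ℝ) := by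
    field_simp
    linarith
  rwa [hco] at h

/-- If two distinct roots pair positively, their difference is a root. -/
private lemma rppd_sub_mem (R : RootSystemData V n) {x y : V} (hx : x ∈ R.Φ) (hy : y ∈ R.Φ)
    (hxy : 0 < ⟪x, y⟫) (hne : x ≠ y) : x - y ∈ R.Φ := by
  have hcx : 0 < ⟪x, x⟫ := rppd_inner_self_pos (R.nonzero x hx)
  have hcy : 0 < ⟪y, y⟫ := rppd_inner_self_pos (R.nonzero y hy)
  have hyx : ⟪y, x⟫ = ⟪x, y⟫ := real_inner_comm x y
  obtain ⟨zc, hzc⟩ := rppd_crystal_int R hy hx   -- 2*⟪x,y⟫ = zc*⟪y,y⟫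
  obtain ⟨zd, hzd⟩ := rppd_crystal_int R hx hy   -- 2*⟪y,x⟫ = zd*⟪x,x⟫
  have hzc_pos : 0 < zc := by
    have : (0 : ℝ) < (zc : ℝ) := by nlinarith
    exact_mod_cast this
  have hzd_pos : 0 < zd := by
    have : (0 : ℝ) < (zd : ℝ) := by nlinarith
    exact_mod_cast this
  by_cases hc1 : zc = 1
  · have h := rppd_reflect_mem R hy hx zc hzc
    rw [hc1] at h
    simpa using h
  by_cases hd1 : zd = 1
  · have h := rppd_reflect_mem R hx hy zd hzd
    rw [hd1] at h
    simp only [Int.cast_one, one_smul] at h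
    have h2 := rppd_neg_mem R h
    rwa [neg_sub] at h2
  -- both coefficients are at least 2; Cauchy–Schwarz forces proportionality
  have h2c : 2 ≤ zc := by omega
  have h2d : 2 ≤ zd := by omega
  have h2c' : (2 : ℝ) ≤ (zc : ℝ) := by exact_mod_cast h2c
  have h2d' : (2 : ℝ) ≤ (zd : ℝ) := by exact_mod_cast h2d
  have hCS : ⟪x, y⟫ ^ 2 ≤ ⟪x, x⟫ * ⟪y, y⟫ := by
    have h1 := abs_real_inner_le_norm x y
    have h2 : ⟪x, x⟫ = ‖x‖ * ‖x‖ := real_inner_self_eq_norm_mul_norm x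
    have h3 : ⟪y, y⟫ = ‖y‖ * ‖y‖ := real_inner_self_eq_norm_mul_norm y
    have h4 : |⟪x, y⟫| ^ 2 ≤ (‖x‖ * ‖y‖) ^ 2 := by
      apply pow_le_pow_left₀ (abs_nonneg _) h1
    rw [sq_abs] at h4
    nlinarith
  have e2 : 2 * ⟪x, y⟫ = (zd : ℝ) * ⟪x, x⟫ := by rw [← hyx]; exact hzd
  have hprod : 4 * ⟪x, y⟫ ^ 2 = ((zc : ℝ) * ⟪y, y⟫) * ((zd : ℝ) * ⟪x, x⟫) := by
    rw [← hzc, ← e2]; ring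
  have h4 : (4 : ℝ) ≤ (zc : ℝ) * (zd : ℝ) := by nlinarith
  have hge : ⟪x, x⟫ * ⟪y, y⟫ ≤ ⟪x, y⟫ ^ 2 := by nlinarith [mul_pos hcy hcx]
  have heq : ⟪x, y⟫ ^ 2 = ⟪x, x⟫ * ⟪y, y⟫ := le_antisymm hCS hge
  have hw : ⟪y, y⟫ • x - ⟪x, y⟫ • y = 0 := by
    have hww : ⟪⟪y, y⟫ • x - ⟪x, y⟫ • y, ⟪y, y⟫ • x - ⟪x, y⟫ • y⟫ = 0 := by
      simp only [inner_sub_left, inner_sub_right, real_inner_smul_left,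
        real_inner_smul_right]
      rw [hyx]
      nlinarith [heq, hcy.le, hcx.le]
    exact inner_self_eq_zero.1 hww
  have hxspan : x ∈ (Submodule.span ℝ {y} : Set V) := by
    apply Submodule.mem_span_singleton.2
    refine ⟨⟪y, y⟫⁻¹ * ⟪x, y⟫, ?_⟩
    have : ⟪y, y⟫ • x = ⟪x, y⟫ • y := by
      have := hw; rwa [sub_eq_zero] at this
    calc (⟪y, y⟫⁻¹ * ⟪x, y⟫) • y = ⟪y, y⟫⁻¹ • (⟪x, y⟫ • y) := by rw [mul_smul]
      _ = ⟪y, y⟫⁻¹ • (⟪y, y⟫ • x) := by rw [← this]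
      _ = x := by rw [smul_smul, inv_mul_cancel₀ hcy.ne', one_smul]
  have hmem : x ∈ ({y, -y} : Set V) := by
    rw [← R.reduced y hy]
    exact ⟨hxspan, hx⟩
  simp only [Set.mem_insert_iff, Set.mem_singleton_iff] at hmem
  rcases hmem with rfl | h
  · exact absurd rfl hne
  · rw [h, inner_neg_left] at hxy
    linarith

end RPPDRoot

section RPPDLex

open Finset

variable {V : Type*} [NormedAddCommGroup V] [InnerProductSpace ℝ V]

/-- Lexicographic positivity with respect to the triple of functionals
`⟪m,·⟫`, `-⟪w,·⟫`, `⟪z,·⟫`. -/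
private def lexPos (m w z x : V) : Prop :=
  0 < ⟪m, x⟫ ∨ (⟪m, x⟫ = 0 ∧ (⟪w, x⟫ < 0 ∨ (⟪w, x⟫ = 0 ∧ 0 < ⟪z, x⟫)))

/-- The corresponding strict lexicographic comparison. -/
private def lexLt (m w z x y : V) : Prop :=
  ⟪m, x⟫ < ⟪m, y⟫ ∨ (⟪m, x⟫ = ⟪m, y⟫ ∧
    (⟪w, y⟫ < ⟪w, x⟫ ∨ (⟪w, x⟫ = ⟪w, y⟫ ∧ ⟪z, x⟫ < ⟪z, y⟫)))

private lemma lexLt_add_of_pos {m w z x y : V} (h : lexPos m w z y) :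
    lexLt m w z x (x + y) := by
  unfold lexPos at h
  unfold lexLt
  simp only [inner_add_right]
  rcases h with h | ⟨h0, h | ⟨h0', h⟩⟩
  · left; linarith
  · right; exact ⟨by linarith, Or.inl (by linarith)⟩
  · right; exact ⟨by linarith, Or.inr ⟨by linarith, by linarith⟩⟩

private lemma lexLt_trans {m w z x y v : V} (h1 : lexLt m w z x y) (h2 : lexLt m w z y v) :
    lexLt m w z x v := by
  unfold lexLt at h1 h2 ⊢
  rcases h1 with h1 | ⟨e1, h1⟩ <;> rcases h2 with h2 | ⟨e2, h2⟩
  · left; linarith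
  · left; linarith
  · left; linarith
  · right
    refine ⟨by linarith, ?_⟩
    rcases h1 with h1 | ⟨f1, h1⟩ <;> rcases h2 with h2 | ⟨f2, h2⟩
    · left; linarith
    · left; linarith
    · left; linarith
    · right; exact ⟨by linarith, by linarith⟩

private lemma lexLt_irrefl {m w z x : V} : ¬ lexLt m w z x x := by
  unfold lexLt
  rintro (h | ⟨-, h | ⟨-, h⟩⟩) <;> linarith

open Classical in
/-- Every element of a lex-positive finite set is a nonnegative combination of the
indecomposable elements. -/
private lemma rppd_cone_rep (m w z : V) (P : Finset V) (hP : ∀ β ∈ P, lexPos m w z β) :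
    ∀ β ∈ P, ∃ c : V → ℝ, (∀ v, 0 ≤ c v) ∧
      ∑ δ ∈ P.filter (fun δ => ¬∃ γ₁ ∈ P, ∃ γ₂ ∈ P, γ₁ + γ₂ = δ), c δ • δ = β := by
  classical
  suffices H : ∀ N : ℕ, ∀ β ∈ P, (P.filter (fun x => lexLt m w z x β)).card ≤ N →
      ∃ c : V → ℝ, (∀ v, 0 ≤ c v) ∧
        ∑ δ ∈ P.filter (fun δ => ¬∃ γ₁ ∈ P, ∃ γ₂ ∈ P, γ₁ + γ₂ = δ), c δ • δ = β by
    exact fun β hβ => H _ β hβ le_rfl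
  intro N
  induction N with
  | zero =>
    intro β hβ hcard
    by_cases hdec : ∃ γ₁ ∈ P, ∃ γ₂ ∈ P, γ₁ + γ₂ = β
    · exfalso
      obtain ⟨γ₁, h₁, γ₂, h₂, hsum⟩ := hdec
      have hlt : lexLt m w z γ₁ β := hsum ▸ lexLt_add_of_pos (hP γ₂ h₂)
      have hmem : γ₁ ∈ P.filter (fun x => lexLt m w z x β) := mem_filter.2 ⟨h₁, hlt⟩
      have := Finset.card_pos.2 ⟨γ₁, hmem⟩
      omega
    · refine ⟨fun v => if v = β then 1 else 0, fun v => by dsimp; split <;> norm_num, ?_⟩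
      rw [Finset.sum_eq_single_of_mem β (mem_filter.2 ⟨hβ, hdec⟩)]
      · simp
      · intro δ _ hδne; simp [hδne]
  | succ N IH =>
    intro β hβ hcard
    by_cases hdec : ∃ γ₁ ∈ P, ∃ γ₂ ∈ P, γ₁ + γ₂ = β
    · obtain ⟨γ₁, h₁, γ₂, h₂, hsum⟩ := hdec
      have hlt₁ : lexLt m w z γ₁ β := hsum ▸ lexLt_add_of_pos (hP γ₂ h₂)
      have hlt₂ : lexLt m w z γ₂ β := by
        have h := lexLt_add_of_pos (m := m) (w := w) (z := z) (x := γ₂) (hP γ₁ h₁)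
        rwa [add_comm γ₂ γ₁, hsum] at h
      have hsub : ∀ γ' ∈ P, lexLt m w z γ' β →
          (P.filter (fun x => lexLt m w z x γ')).card ≤ N := by
        intro γ' hγ'P hγ'β
        have hss : P.filter (fun x => lexLt m w z x γ') ⊂
            P.filter (fun x => lexLt m w z x β) := by
          constructor
          · intro x hx
            rw [mem_filter] at hx ⊢
            exact ⟨hx.1, lexLt_trans hx.2 hγ'β⟩
          · intro hcon
            have h1 : γ' ∈ P.filter (fun x => lexLt m w z x β) := mem_filter.2 ⟨hγ'P, hγ'β⟩
            have h2 := hcon h1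
            rw [mem_filter] at h2
            exact lexLt_irrefl h2.2
        have := Finset.card_lt_card hss
        omega
      obtain ⟨c₁, hc₁, hs₁⟩ := IH γ₁ h₁ (hsub γ₁ h₁ hlt₁)
      obtain ⟨c₂, hc₂, hs₂⟩ := IH γ₂ h₂ (hsub γ₂ h₂ hlt₂)
      refine ⟨fun v => c₁ v + c₂ v, fun v => add_nonneg (hc₁ v) (hc₂ v), ?_⟩
      rw [← hsum, ← hs₁, ← hs₂, ← Finset.sum_add_distrib]
      exact Finset.sum_congr rfl fun δ _ => add_smul _ _ _
    · refine ⟨fun v => if v = β then 1 else 0, fun v => by dsimp; split <;> norm_num, ?_⟩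
      rw [Finset.sum_eq_single_of_mem β (mem_filter.2 ⟨hβ, hdec⟩)]
      · simp
      · intro δ _ hδne; simp [hδne]

end RPPDLex

section RPPDCore

open Finset

variable {V : Type*} [NormedAddCommGroup V] [InnerProductSpace ℝ V]

/-- The support function of a spanning symmetric finite set is positive off the origin. -/
private lemma supInner_pos {n : ℕ} (R : RootSystemData V n) (U : Submodule ℝ V)
    (hUle : U ≤ Submodule.span ℝ (R.Φ ∩ (U : Set V)))
    (Φ'F : Finset V) (hΦ'F : ∀ x, x ∈ Φ'F ↔ x ∈ R.Φ ∩ (U : Set V)) (h'ne : Φ'F.Nonempty)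
    {u : V} (hu : u ∈ U) (hu0 : u ≠ 0) : 0 < supInner Φ'F h'ne u := by
  have hsym' : ∀ β ∈ Φ'F, -β ∈ Φ'F := by
    intro β hβ
    have h := (hΦ'F β).1 hβ
    exact (hΦ'F _).2 ⟨rppd_neg_mem R h.1, U.neg_mem h.2⟩
  by_contra hle
  push_neg at hle
  have hzero : ∀ β ∈ Φ'F, ⟪β, u⟫ = 0 := by
    intro β hβ
    have h1 : ⟪β, u⟫ ≤ supInner Φ'F h'ne u := le_supInner _ hβ
    have h2 : ⟪-β, u⟫ ≤ supInner Φ'F h'ne u := le_supInner _ (hsym' β hβ)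
    rw [inner_neg_left] at h2
    linarith
  have horth : ∀ v ∈ Submodule.span ℝ (R.Φ ∩ (U : Set V)), ⟪v, u⟫ = 0 := by
    intro v hv
    induction hv using Submodule.span_induction with
    | mem x hx => exact hzero x ((hΦ'F x).2 hx)
    | zero => exact inner_zero_left u
    | add x y hx hy ihx ihy => rw [inner_add_left, ihx, ihy, add_zero]
    | smul a x hx ihx => rw [real_inner_smul_left, ihx, mul_zero]
  have := horth u (hUle hu)
  exact hu0 (inner_self_eq_zero.1 this)

open Classical in
/-- The core support-function inequality: every root pairs with every nonzero `u ∈ U`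
strictly below twice the maximal pairing of `u` with roots in `U`. -/
private theorem rppd_core {V : Type*} [NormedAddCommGroup V] [InnerProductSpace ℝ V]
    [FiniteDimensional ℝ V] {n : ℕ}
    (R : RootSystemData V n) (U : Submodule ℝ V)
    (hUle : U ≤ Submodule.span ℝ (R.Φ ∩ (U : Set V)))
    (ΦF Φ'F : Finset V)
    (hΦF : ∀ x, x ∈ ΦF ↔ x ∈ R.Φ)
    (hΦ'F : ∀ x, x ∈ Φ'F ↔ x ∈ R.Φ ∩ (U : Set V))
    (hne : ΦF.Nonempty) (h'ne : Φ'F.Nonempty)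
    {u : V} (hu : u ∈ U) (hu0 : u ≠ 0) {γ : V} (hγ : γ ∈ R.Φ) :
    ⟪γ, u⟫ < 2 * supInner Φ'F h'ne u := by
  classical
  by_contra hcon
  push_neg at hcon
  set h' := supInner Φ'F h'ne u with hh'
  have h'pos : 0 < h' := supInner_pos R U hUle Φ'F hΦ'F h'ne hu hu0
  have hΦ'Φ : ∀ β ∈ Φ'F, β ∈ R.Φ := fun β hβ => ((hΦ'F β).1 hβ).1
  have hΦ'U : ∀ β ∈ Φ'F, β ∈ U := fun β hβ => ((hΦ'F β).1 hβ).2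
  have hsym' : ∀ β ∈ Φ'F, -β ∈ Φ'F := by
    intro β hβ
    exact (hΦ'F _).2 ⟨rppd_neg_mem R (hΦ'Φ β hβ), U.neg_mem (hΦ'U β hβ)⟩
  -- the maximizer over all of Φ
  set M := supInner ΦF hne u with hMdef
  obtain ⟨α, hαF, hMα⟩ := exists_eq_supInner hne u
  have hαΦ : α ∈ R.Φ := (hΦF α).1 hαF
  have hγle : ⟪γ, u⟫ ≤ M := le_supInner _ ((hΦF γ).2 hγ)
  have hM2 : 2 * h' ≤ M := le_trans hcon hγle
  have hMpos : 0 < M := by linarith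
  have hαU : α ∉ U := by
    intro hmem
    have h1 : ⟪α, u⟫ ≤ h' := le_supInner _ ((hΦ'F α).2 ⟨hαΦ, hmem⟩)
    rw [← hMα] at h1
    linarith
  -- orthogonal projection of α onto U
  set μ : V := ((U.orthogonalProjection α : U) : V) with hμdef
  have hμU : μ ∈ U := (U.orthogonalProjection α).2
  have haorth : α - μ ∈ Uᗮ := Submodule.sub_starProjection_mem_orthogonal (K := U) α
  have hinner_a : ∀ w ∈ U, ⟪w, α - μ⟫ = 0 :=
    fun w hw => (Submodule.mem_orthogonal U (α - μ)).1 haorth w hw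
  have hproj : ∀ w ∈ U, ⟪μ, w⟫ = ⟪α, w⟫ := by
    intro w hw
    have h0 := hinner_a w hw
    rw [inner_sub_right] at h0
    rw [real_inner_comm w μ, real_inner_comm w α]
    linarith
  have hane : α - μ ≠ 0 := by
    intro h0
    rw [sub_eq_zero] at h0
    exact hαU (h0 ▸ hμU)
  have hμu : ⟪μ, u⟫ = M := by
    rw [hproj u hu, hMdef]
    exact hMα.symm
  have hcα : 0 < ⟪α, α⟫ := rppd_inner_self_pos (R.nonzero α hαΦ)
  -- Key step: any root of U pairing positively with μ pairs exactly ⟪α,α⟫/2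
  have K3 : ∀ β ∈ Φ'F, 0 < ⟪μ, β⟫ → 2 * ⟪μ, β⟫ = ⟪α, α⟫ := by
    intro β hβ hposμβ
    have hβΦ := hΦ'Φ β hβ
    have hβU := hΦ'U β hβ
    have hβα : ⟪β, α⟫ = ⟪μ, β⟫ := by
      rw [real_inner_comm α β, ← hproj β hβU]
    obtain ⟨zd, hzd⟩ := rppd_crystal_int R hαΦ hβΦ
    have hzdpos : 0 < zd := by
      have : (0 : ℝ) < (zd : ℝ) := by nlinarith
      exact_mod_cast this
    have hrefl : β - (zd : ℝ) • α ∈ R.Φ := rppd_reflect_mem R hαΦ hβΦ zd hzd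
    have hneg : -(β - (zd : ℝ) • α) ∈ R.Φ := rppd_neg_mem R hrefl
    have hle : ⟪-(β - (zd : ℝ) • α), u⟫ ≤ M := le_supInner _ ((hΦF _).2 hneg)
    rw [inner_neg_left, inner_sub_left, real_inner_smul_left, ← hMα] at hle
    have hβu : ⟪β, u⟫ ≤ h' := le_supInner _ hβ
    have hzd32 : (zd : ℝ) ≤ 3 / 2 := by nlinarith
    have hzd2 : zd < 2 := by
      have : (zd : ℝ) < 2 := by linarith
      exact_mod_cast this
    have hzd1 : zd = 1 := by omega
    rw [hzd1] at hzd
    push_cast at hzd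
    linarith
  -- generic tie-breaking vector
  set D := Φ'F.filter (fun β => ⟪μ, β⟫ = 0 ∧ ⟪u, β⟫ = 0) with hDdef
  obtain ⟨ζ, hζ⟩ := rppd_exists_generic D
    (fun β hβ => R.nonzero β (hΦ'Φ β (mem_filter.1 hβ).1))
  -- the lex-positive system
  set P := Φ'F.filter (lexPos μ u ζ) with hPdef
  have hPsub : ∀ β ∈ P, β ∈ Φ'F := fun β hβ => (mem_filter.1 hβ).1
  have hPlex : ∀ β ∈ P, lexPos μ u ζ β := fun β hβ => (mem_filter.1 hβ).2
  have hcover : ∀ β ∈ Φ'F, β ∈ P ∨ -β ∈ P := by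
    intro β hβ
    have hnegmem := hsym' β hβ
    rcases lt_trichotomy 0 ⟪μ, β⟫ with hm | hm | hm
    · exact Or.inl (mem_filter.2 ⟨hβ, Or.inl hm⟩)
    · rcases lt_trichotomy ⟪u, β⟫ 0 with hw | hw | hw
      · exact Or.inl (mem_filter.2 ⟨hβ, Or.inr ⟨hm.symm, Or.inl hw⟩⟩)
      · have hβD : β ∈ D := mem_filter.2 ⟨hβ, hm.symm, hw⟩
        rcases (hζ β hβD).lt_or_gt with hz | hz
        · refine Or.inr (mem_filter.2 ⟨hnegmem, Or.inr ⟨?_, Or.inr ⟨?_, ?_⟩⟩⟩) <;>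
            rw [inner_neg_right] <;> linarith
        · exact Or.inl (mem_filter.2 ⟨hβ, Or.inr ⟨hm.symm, Or.inr ⟨hw, hz⟩⟩⟩)
      · refine Or.inr (mem_filter.2 ⟨hnegmem, Or.inr ⟨?_, Or.inl ?_⟩⟩) <;>
          rw [inner_neg_right] <;> linarith
    · refine Or.inr (mem_filter.2 ⟨hnegmem, Or.inl ?_⟩)
      rw [inner_neg_right]; linarith
  -- representation in the cone over indecomposables
  have hrep := rppd_cone_rep μ u ζ P hPlex
  set Δ := P.filter (fun δ => ¬∃ γ₁ ∈ P, ∃ γ₂ ∈ P, γ₁ + γ₂ = δ) with hΔdef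
  have hΔP : ∀ δ ∈ Δ, δ ∈ P := fun δ h => (mem_filter.1 h).1
  -- obtuseness of indecomposables
  have hobt : ∀ δ ∈ Δ, ∀ δ' ∈ Δ, δ ≠ δ' → ⟪δ, δ'⟫ ≤ 0 := by
    intro δ hδ δ' hδ' hne'
    by_contra hpos
    push_neg at hpos
    have hδ'' := hPsub δ (hΔP δ hδ)
    have hδ''' := hPsub δ' (hΔP δ' hδ')
    have hsubΦ : δ - δ' ∈ R.Φ :=
      rppd_sub_mem R (hΦ'Φ δ hδ'') (hΦ'Φ δ' hδ''') hpos hne'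
    have hsubU : δ - δ' ∈ U := U.sub_mem (hΦ'U δ hδ'') (hΦ'U δ' hδ''')
    have hsubΦ' : δ - δ' ∈ Φ'F := (hΦ'F _).2 ⟨hsubΦ, hsubU⟩
    rcases hcover _ hsubΦ' with hc | hc
    · exact (mem_filter.1 hδ).2 ⟨δ', hΔP δ' hδ', δ - δ', hc, by abel⟩
    · rw [neg_sub] at hc
      exact (mem_filter.1 hδ').2 ⟨δ, hΔP δ hδ, δ' - δ, hc, by abel⟩
  -- μ lies in the span of Δ
  have hPspan : ∀ β' ∈ P, β' ∈ Submodule.span ℝ (↑Δ : Set V) := by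
    intro β' hβ'
    obtain ⟨c, hc0, hcsum⟩ := hrep β' hβ'
    rw [← hcsum]
    exact Submodule.sum_smul_mem _ _ fun δ hδ => Submodule.subset_span (Finset.mem_coe.2 hδ)
  have hμspan : μ ∈ Submodule.span ℝ (↑Δ : Set V) := by
    have h1 : U ≤ Submodule.span ℝ (↑Δ : Set V) := by
      refine le_trans hUle (Submodule.span_le.2 ?_)
      intro x hx
      rcases hcover x ((hΦ'F x).2 hx) with h | h
      · exact hPspan x h
      · have h2 := Submodule.neg_mem _ (hPspan _ h)
        simpa using h2
    exact h1 hμU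
  obtain ⟨F, -, hF⟩ := Submodule.mem_span_finset.1 hμspan
  -- dominance of μ and of q with respect to Δ
  have hμdom : ∀ δ ∈ Δ, 0 ≤ ⟪μ, δ⟫ := by
    intro δ hδ
    rcases hPlex δ (hΔP δ hδ) with hm | ⟨hm0, -⟩
    · exact hm.le
    · exact hm0.ge
  set q : V := h' • μ - (⟪α, α⟫ / 2) • u with hqdef
  have hqdom : ∀ δ ∈ Δ, 0 ≤ ⟪δ, q⟫ := by
    intro δ hδ
    have hδP := hΔP δ hδ
    have hδ' := hPsub δ hδP
    have hδu : ⟪δ, u⟫ ≤ h' := le_supInner _ hδ'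
    have hexp : ⟪δ, q⟫ = h' * ⟪δ, μ⟫ - ⟪α, α⟫ / 2 * ⟪δ, u⟫ := by
      rw [hqdef, inner_sub_right, real_inner_smul_right, real_inner_smul_right]
    rcases hPlex δ hδP with hm | ⟨hm0, hrest⟩
    · have hK := K3 δ hδ' hm
      have hδμ : ⟪δ, μ⟫ = ⟪α, α⟫ / 2 := by
        rw [real_inner_comm μ δ]; linarith
      rw [hexp, hδμ]
      nlinarith
    · have hδμ0 : ⟪δ, μ⟫ = 0 := by rw [real_inner_comm μ δ]; exact hm0
      have hδu0 : ⟪δ, u⟫ ≤ 0 := by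
        rw [real_inner_comm u δ]
        rcases hrest with h | ⟨h, -⟩
        · exact h.le
        · exact h.le
      rw [hexp, hδμ0]
      nlinarith
  -- positive/negative part decomposition of the coefficients
  set Pos := Δ.filter (fun δ => 0 ≤ F δ) with hPosdef
  set Neg := Δ.filter (fun δ => ¬0 ≤ F δ) with hNegdef
  have hsplit : ∑ δ ∈ Pos, F δ • δ + ∑ δ ∈ Neg, F δ • δ = μ := by
    rw [hPosdef, hNegdef, Finset.sum_filter_add_sum_filter_not]
    exact hF
  set Nv : V := ∑ δ ∈ Neg, (-F δ) • δ with hNvdef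
  have hNveq : ∑ δ ∈ Neg, F δ • δ = -Nv := by
    rw [hNvdef, ← Finset.sum_neg_distrib]
    exact Finset.sum_congr rfl fun δ _ => by rw [neg_smul, neg_neg]
  have hμeq : μ = (∑ δ ∈ Pos, F δ • δ) - Nv := by
    rw [← hsplit, hNveq]; abel
  have hSPN : ⟪∑ δ ∈ Pos, F δ • δ, Nv⟫ ≤ 0 := by
    rw [sum_inner]
    apply Finset.sum_nonpos
    intro i hi
    rw [real_inner_smul_left, hNvdef, inner_sum]
    have hFi : 0 ≤ F i := (mem_filter.1 hi).2
    apply mul_nonpos_of_nonneg_of_nonpos hFi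
    apply Finset.sum_nonpos
    intro j hj
    rw [real_inner_smul_right]
    have hFj : F j < 0 := by
      have := (mem_filter.1 hj).2; linarith [not_le.1 this]
    have hij : i ≠ j := by
      intro hij
      rw [hij] at hFi
      linarith
    have hobt' := hobt i (mem_filter.1 hi).1 j (mem_filter.1 hj).1 hij
    nlinarith
  have hμN : 0 ≤ ⟪μ, Nv⟫ := by
    rw [hNvdef, inner_sum]
    apply Finset.sum_nonneg
    intro j hj
    rw [real_inner_smul_right]
    have hFj : F j < 0 := by
      have := (mem_filter.1 hj).2; linarith [not_le.1 this]
    exact mul_nonneg (by linarith) (hμdom j (mem_filter.1 hj).1)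
  have hNv0 : Nv = 0 := by
    have hNN : ⟪Nv, Nv⟫ ≤ 0 := by
      have hNalt : Nv = (∑ δ ∈ Pos, F δ • δ) - μ := by rw [hμeq]; abel
      calc ⟪Nv, Nv⟫ = ⟪∑ δ ∈ Pos, F δ • δ, Nv⟫ - ⟪μ, Nv⟫ := by
            nth_rewrite 1 [hNalt]
            rw [inner_sub_left]
        _ ≤ 0 := by linarith
    exact inner_self_eq_zero.1 (le_antisymm hNN real_inner_self_nonneg)
  have hμPos : μ = ∑ δ ∈ Pos, F δ • δ := by rw [hμeq, hNv0, sub_zero]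
  -- the two-dominant-vectors inequality
  have hstar : 0 ≤ ⟪μ, q⟫ := by
    nth_rewrite 1 [hμPos]
    rw [sum_inner]
    apply Finset.sum_nonneg
    intro i hi
    rw [real_inner_smul_left]
    exact mul_nonneg (mem_filter.1 hi).2 (hqdom i (mem_filter.1 hi).1)
  -- final contradiction
  have hμq : ⟪μ, q⟫ = h' * ⟪μ, μ⟫ - ⟪α, α⟫ / 2 * M := by
    rw [hqdef, inner_sub_right, real_inner_smul_right, real_inner_smul_right, hμu]
  have hPyth : ⟪α, α⟫ = ⟪μ, μ⟫ + ⟪α - μ, α - μ⟫ := by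
    have hdecomp : α = μ + (α - μ) := by abel
    have hcross : ⟪μ, α - μ⟫ = 0 := hinner_a μ hμU
    calc ⟪α, α⟫ = ⟪μ + (α - μ), μ + (α - μ)⟫ := by rw [← hdecomp]
      _ = ⟪μ, μ⟫ + 2 * ⟪μ, α - μ⟫ + ⟪α - μ, α - μ⟫ := real_inner_add_add_self _ _
      _ = ⟪μ, μ⟫ + ⟪α - μ, α - μ⟫ := by rw [hcross]; ring
  have hapos : 0 < ⟪α - μ, α - μ⟫ := rppd_inner_self_pos hane
  have hKM : ⟪α, α⟫ / 2 * (2 * h') ≤ ⟪α, α⟫ / 2 * M :=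
    mul_le_mul_of_nonneg_left hM2 (by positivity)
  nlinarith [mul_pos h'pos hapos]

end RPPDCore

/-- Lemma 1.5, projection-dilation property of root polytopes:
there is `1 ≤ κ < 2` with `π_U(𝒫_Φ) ⊆ κ·𝒫_{Φ_U}`. -/
theorem root_polytope_projection_dilation {V : Type*} [NormedAddCommGroup V]
    [InnerProductSpace ℝ V] [FiniteDimensional ℝ V]
    {n : ℕ} (R : RootSystemData V n) (U : Submodule ℝ V) (hU : U ≠ ⊥)
    (hUspan : ∃ S ⊆ R.Φ, Submodule.span ℝ S = U) :
    ∃ κ : ℝ, 1 ≤ κ ∧ κ < 2 ∧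
      (fun v => ((U.orthogonalProjection v : U) : V)) '' (convexHull ℝ R.Φ) ⊆
        κ • convexHull ℝ (R.Φ ∩ (U : Set V)) := by
  classical
  obtain ⟨S₀, hS₀Φ, hS₀span⟩ := hUspan
  have hS₀U : S₀ ⊆ (U : Set V) := by
    intro x hx
    have : x ∈ Submodule.span ℝ S₀ := Submodule.subset_span hx
    rwa [hS₀span] at this
  have hUle : U ≤ Submodule.span ℝ (R.Φ ∩ (U : Set V)) := by
    have h1 : Submodule.span ℝ S₀ ≤ Submodule.span ℝ (R.Φ ∩ (U : Set V)) :=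
      Submodule.span_mono fun x hx => ⟨hS₀Φ hx, hS₀U hx⟩
    rwa [hS₀span] at h1
  set ΦF := R.finite.toFinset with hΦFdef
  have hΦF : ∀ x, x ∈ ΦF ↔ x ∈ R.Φ := fun x => R.finite.mem_toFinset
  have hΦ'fin : (R.Φ ∩ (U : Set V)).Finite := R.finite.subset Set.inter_subset_left
  set Φ'F := hΦ'fin.toFinset with hΦ'Fdef
  have hΦ'F : ∀ x, x ∈ Φ'F ↔ x ∈ R.Φ ∩ (U : Set V) := fun x => hΦ'fin.mem_toFinset
  -- nonemptiness
  have hS₀ne : S₀.Nonempty := by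
    rcases Set.eq_empty_or_nonempty S₀ with rfl | h
    · exact absurd (by rw [← hS₀span, Submodule.span_empty]) hU
    · exact h
  obtain ⟨β₀, hβ₀S⟩ := hS₀ne
  have hβ₀ : β₀ ∈ R.Φ ∩ (U : Set V) := ⟨hS₀Φ hβ₀S, hS₀U hβ₀S⟩
  have h'ne : Φ'F.Nonempty := ⟨β₀, (hΦ'F β₀).2 hβ₀⟩
  have hne : ΦF.Nonempty := ⟨β₀, (hΦF β₀).2 hβ₀.1⟩
  -- the unit sphere of U
  set S : Set V := (U : Set V) ∩ Metric.sphere 0 1 with hSdef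
  have hUclosed : IsClosed (U : Set V) := Submodule.closed_of_finiteDimensional U
  have hScompact : IsCompact S := (isCompact_sphere (0 : V) 1).inter_left hUclosed
  have hSU : ∀ v ∈ S, v ∈ U := fun v hv => hv.1
  have hS0 : ∀ v ∈ S, v ≠ 0 := by
    intro v hv h0
    have h1 := hv.2
    rw [h0, Metric.mem_sphere, dist_self] at h1
    norm_num at h1
  have hSne : S.Nonempty := by
    have hβ₀0 : β₀ ≠ 0 := R.nonzero β₀ hβ₀.1
    refine ⟨‖β₀‖⁻¹ • β₀, U.smul_mem _ hβ₀.2, ?_⟩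
    rw [Metric.mem_sphere, dist_zero_right, norm_smul, norm_inv, norm_norm,
      inv_mul_cancel₀ (norm_ne_zero_iff.2 hβ₀0)]
  -- continuity and extrema
  have hcont1 : Continuous fun v => supInner Φ'F h'ne v := continuous_supInner _ _
  have hcont2 : Continuous fun v => supInner ΦF hne v := continuous_supInner _ _
  have hG : Continuous fun v => 2 * supInner Φ'F h'ne v - supInner ΦF hne v :=
    ((continuous_const.mul hcont1).sub hcont2)
  obtain ⟨v₀, hv₀S, hv₀min⟩ := hScompact.exists_isMinOn hSne hG.continuousOn
  obtain ⟨v₁, hv₁S, hv₁max⟩ := hScompact.exists_isMaxOn hSne hcont1.continuousOn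
  set m : ℝ := 2 * supInner Φ'F h'ne v₀ - supInner ΦF hne v₀ with hmdef
  have hmpos : 0 < m := by
    have hlt : supInner ΦF hne v₀ < 2 * supInner Φ'F h'ne v₀ := by
      apply supInner_lt hne
      intro g hg
      exact rppd_core R U hUle ΦF Φ'F hΦF hΦ'F hne h'ne (hSU v₀ hv₀S) (hS0 v₀ hv₀S)
        ((hΦF g).1 hg)
    rw [hmdef]; linarith
  set Hh : ℝ := supInner Φ'F h'ne v₁ with hHdef
  have hHpos : 0 < Hh :=
    supInner_pos R U hUle Φ'F hΦ'F h'ne (hSU v₁ hv₁S) (hS0 v₁ hv₁S)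
  set κ : ℝ := max (2 - m / Hh) 1 with hκdef
  have hκ1 : 1 ≤ κ := le_max_right _ _
  have hκpos : 0 < κ := lt_of_lt_of_le one_pos hκ1
  have hκlt : κ < 2 := by
    apply max_lt _ one_lt_two
    have : 0 < m / Hh := div_pos hmpos hHpos
    linarith
  -- the key pointwise support bound
  have hkey : ∀ v ∈ U, ∀ g ∈ R.Φ, ⟪g, v⟫ ≤ κ * supInner Φ'F h'ne v := by
    intro v hv g hg
    by_cases hv0 : v = 0
    · rw [hv0, inner_zero_right, supInner_zero h'ne, mul_zero]
    · set v' : V := ‖v‖⁻¹ • v with hv'def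
      have hv'S : v' ∈ S := by
        refine ⟨U.smul_mem _ hv, ?_⟩
        rw [Metric.mem_sphere, dist_zero_right, hv'def, norm_smul, norm_inv, norm_norm,
          inv_mul_cancel₀ (norm_ne_zero_iff.2 hv0)]
      have h'v'pos : 0 < supInner Φ'F h'ne v' :=
        supInner_pos R U hUle Φ'F hΦ'F h'ne (hSU v' hv'S) (hS0 v' hv'S)
      have hb1 : ⟪g, v'⟫ ≤ supInner ΦF hne v' := le_supInner _ ((hΦF g).2 hg)
      have hb2 : supInner ΦF hne v' ≤ 2 * supInner Φ'F h'ne v' - m := by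
        have h1 : 2 * supInner Φ'F h'ne v₀ - supInner ΦF hne v₀
            ≤ 2 * supInner Φ'F h'ne v' - supInner ΦF hne v' :=
          isMinOn_iff.mp hv₀min v' hv'S
        rw [hmdef]; linarith
      have hb3 : supInner Φ'F h'ne v' ≤ Hh := by
        have h1 : supInner Φ'F h'ne v' ≤ supInner Φ'F h'ne v₁ :=
          isMaxOn_iff.mp hv₁max v' hv'S
        rw [hHdef]; exact h1
      have hfrac : m / Hh * supInner Φ'F h'ne v' ≤ m := by
        have h1 : m / Hh * supInner Φ'F h'ne v' ≤ m / Hh * Hh :=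
          mul_le_mul_of_nonneg_left hb3 (div_nonneg hmpos.le hHpos.le)
        rwa [div_mul_cancel₀ m hHpos.ne'] at h1
      have hb4 : 2 * supInner Φ'F h'ne v' - m ≤ κ * supInner Φ'F h'ne v' := by
        have hκ0 : 2 - m / Hh ≤ κ := le_max_left _ _
        have h2 : (2 - m / Hh) * supInner Φ'F h'ne v'
            = 2 * supInner Φ'F h'ne v' - m / Hh * supInner Φ'F h'ne v' := by ring
        have h3 : (2 - m / Hh) * supInner Φ'F h'ne v' ≤ κ * supInner Φ'F h'ne v' :=
          mul_le_mul_of_nonneg_right hκ0 h'v'pos.le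
        linarith
      have hv'bound : ⟪g, v'⟫ ≤ κ * supInner Φ'F h'ne v' := by linarith
      have hvv : v = ‖v‖ • v' := by
        rw [hv'def, smul_smul, mul_inv_cancel₀ (norm_ne_zero_iff.2 hv0), one_smul]
      calc ⟪g, v⟫ = ‖v‖ * ⟪g, v'⟫ := by
            nth_rewrite 1 [hvv]; rw [real_inner_smul_right]
        _ ≤ ‖v‖ * (κ * supInner Φ'F h'ne v') :=
            mul_le_mul_of_nonneg_left hv'bound (norm_nonneg v)
        _ = κ * (‖v‖ * supInner Φ'F h'ne v') := by ring
        _ = κ * supInner Φ'F h'ne v := by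
            rw [← supInner_smul h'ne (norm_nonneg v) v', ← hvv]
  -- pointwise membership of projected roots in the dilated polytope
  set Pc : Set V := convexHull ℝ (R.Φ ∩ (U : Set V)) with hPcdef
  have hPcU : Pc ⊆ (U : Set V) := convexHull_min (fun x hx => hx.2) U.convex
  have h0Pc : (0 : V) ∈ Pc := by
    have hmβ : -β₀ ∈ R.Φ ∩ (U : Set V) := ⟨rppd_neg_mem R hβ₀.1, U.neg_mem hβ₀.2⟩
    have hseg := (convex_convexHull ℝ (R.Φ ∩ (U : Set V))).segment_subset
      (subset_convexHull ℝ _ hmβ) (subset_convexHull ℝ _ hβ₀)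
    apply hseg
    refine ⟨1 / 2, 1 / 2, by norm_num, by norm_num, by norm_num, ?_⟩
    rw [smul_neg]
    abel
  have hPcclosed : IsClosed Pc := (hΦ'fin.isCompact_convexHull ℝ).isClosed
  have hPcconv : Convex ℝ Pc := convex_convexHull ℝ _
  have hpoint : ∀ g ∈ R.Φ, ((U.orthogonalProjection g : U) : V) ∈ κ • Pc := by
    intro g hg
    by_contra hnot
    rw [Set.mem_smul_set_iff_inv_smul_mem₀ hκpos.ne'] at hnot
    obtain ⟨f, c, hfs, hcx⟩ := geometric_hahn_banach_closed_point hPcconv hPcclosed hnot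
    set wv : V := (InnerProductSpace.toDual ℝ V).symm f with hwvdef
    have hfeq : ∀ y : V, f y = ⟪wv, y⟫ := fun y =>
      (InnerProductSpace.toDual_symm_apply).symm
    set vU : V := ((U.orthogonalProjection wv : U) : V) with hvUdef
    have hvUmem : vU ∈ U := SetLike.coe_mem _
    have hfU : ∀ y ∈ U, f y = ⟪vU, y⟫ := by
      intro y hy
      rw [hfeq]
      have h1 : ⟪y, wv - vU⟫ = 0 :=
        (Submodule.mem_orthogonal U (wv - vU)).1
          (Submodule.sub_starProjection_mem_orthogonal (K := U) wv) y hy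
      have h2 : ⟪wv - vU, y⟫ = 0 := by rw [real_inner_comm y (wv - vU)]; exact h1
      rw [inner_sub_left] at h2
      linarith
    have hc0 : 0 < c := by
      have h1 := hfs 0 h0Pc
      rwa [map_zero] at h1
    have hgU : ((U.orthogonalProjection g : U) : V) ∈ U := SetLike.coe_mem _
    have hsupc : supInner Φ'F h'ne vU < c := by
      apply supInner_lt h'ne
      intro β hβ
      have hβmem := (hΦ'F β).1 hβ
      have h1 := hfs β (subset_convexHull ℝ _ hβmem)
      rw [hfU β hβmem.2] at h1
      rwa [real_inner_comm β vU] at h1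
    have hgproj : ⟪vU, ((U.orthogonalProjection g : U) : V)⟫ = ⟪g, vU⟫ := by
      have h1 : ⟪vU, g - ((U.orthogonalProjection g : U) : V)⟫ = 0 :=
        (Submodule.mem_orthogonal U _).1 (Submodule.sub_starProjection_mem_orthogonal (K := U) g) vU hvUmem
      rw [inner_sub_right] at h1
      rw [real_inner_comm vU g]
      linarith
    have hcx' : c < κ⁻¹ * ⟪g, vU⟫ := by
      have h1 := hcx
      rw [hfU _ (U.smul_mem _ hgU)] at h1
      rwa [real_inner_smul_right, hgproj] at h1
    have hkb := hkey vU hvUmem g hg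
    have hκc : κ * c < ⟪g, vU⟫ := by
      have h1 := mul_lt_mul_of_pos_left hcx' hκpos
      rwa [← mul_assoc, mul_inv_cancel₀ hκpos.ne', one_mul] at h1
    have h2 : κ * supInner Φ'F h'ne vU < κ * c := mul_lt_mul_of_pos_left hsupc hκpos
    linarith
  -- conclude via convexity
  refine ⟨κ, hκ1, hκlt, ?_⟩
  rintro y ⟨x, hx, rfl⟩
  set L : V →ₗ[ℝ] V := U.subtype ∘ₗ (U.orthogonalProjection : V →L[ℝ] U).toLinearMap
    with hLdef
  have hLx : ∀ z : V, L z = ((U.orthogonalProjection z : U) : V) := fun z => rfl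
  have hTconv : Convex ℝ (⇑L ⁻¹' (κ • Pc)) := (hPcconv.smul κ).linear_preimage L
  have hΦT : R.Φ ⊆ ⇑L ⁻¹' (κ • Pc) := by
    intro g hg
    rw [Set.mem_preimage, hLx]
    exact hpoint g hg
  have hxT := convexHull_min hΦT hTconv hx
  rw [Set.mem_preimage, hLx] at hxT
  exact hxT
end

section
/- Let X ⊆ Φ^+ and let v ∈ V be such that π_X(v) = 0, where π_X denotes the orthogonal projection of V onto Span_ℝ(X). Then there exist w ∈ W and I ⊆ [n] such that w·Span_ℝ(X) = Span_ℝ{α_i : i ∈ I} and ⟨wv, α_i^∨⟩ ≥ 0 for all i ∈ [n] (i.e., wv lies in the closed dominant cone P^ℝ_{≥0}). -/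
open RealInnerProductSpace Pointwise

section Aux

variable {V : Type*} [NormedAddCommGroup V] [InnerProductSpace ℝ V]

lemma inner_corootOf (α u : V) : ⟪u, corootOf α⟫ = (2 / ⟪α, α⟫) * ⟪u, α⟫ := by
  simp [corootOf, real_inner_smul_right]

lemma rsReflect_add (α u v : V) :
    rsReflect α (u + v) = rsReflect α u + rsReflect α v := by
  simp only [rsReflect, inner_add_left, add_smul]
  abel

lemma rsReflect_smul (α : V) (c : ℝ) (u : V) :
    rsReflect α (c • u) = c • rsReflect α u := by
  simp only [rsReflect, real_inner_smul_left, smul_sub, smul_smul]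

lemma rsReflect_involutive (α : V) (hα : α ≠ 0) (u : V) :
    rsReflect α (rsReflect α u) = u := by
  have h : ⟪α, α⟫ ≠ 0 := by
    simpa using hα
  simp only [rsReflect, inner_corootOf, inner_sub_left, real_inner_smul_left]
  field_simp
  ring_nf
  module

lemma inner_rsReflect (α : V) (hα : α ≠ 0) (x y : V) :
    ⟪rsReflect α x, rsReflect α y⟫ = ⟪x, y⟫ := by
  have h : ⟪α, α⟫ ≠ 0 := by simpa using hα
  simp only [rsReflect, inner_corootOf, inner_sub_left, inner_sub_right,
    real_inner_smul_left, real_inner_smul_right, real_inner_comm y α]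
  field_simp
  ring

lemma inner_self_pos_of_ne {x : V} (h : x ≠ 0) : 0 < ⟪x, x⟫ := by
  rw [real_inner_self_eq_norm_sq]
  have : ‖x‖ > 0 := norm_pos_iff.mpr h
  positivity

/-- The reflection `s_α` packaged as a linear equivalence. -/
noncomputable def reflEquiv (α : V) (hα : α ≠ 0) : V ≃ₗ[ℝ] V where
  toFun := rsReflect α
  invFun := rsReflect α
  map_add' := rsReflect_add α
  map_smul' := rsReflect_smul α
  left_inv := rsReflect_involutive α hα
  right_inv := rsReflect_involutive α hα

@[simp] lemma reflEquiv_apply (α : V) (hα : α ≠ 0) (u : V) :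
    reflEquiv α hα u = rsReflect α u := rfl

end Aux

namespace RootSystemData

variable {V : Type*} [NormedAddCommGroup V] [InnerProductSpace ℝ V] {n : ℕ}
variable (R : RootSystemData V n)

lemma inner_self_ne_zero_of_mem {α : V} (hα : α ∈ R.Φ) : ⟪α, α⟫ ≠ 0 := by
  simpa using R.nonzero α hα

lemma reflEquiv_mem_weyl {α : V} (hα : α ∈ R.Φ) :
    reflEquiv α (R.nonzero α hα) ∈ R.weyl :=
  Subgroup.subset_closure ⟨α, hα, fun _ => rfl⟩

lemma weyl_inner {w : V ≃ₗ[ℝ] V} (hw : w ∈ R.weyl) (x y : V) :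
    ⟪w x, w y⟫ = ⟪x, y⟫ := by
  induction hw using Subgroup.closure_induction generalizing x y with
  | mem w hw =>
      obtain ⟨α, hα, hwα⟩ := hw
      rw [hwα, hwα]
      exact inner_rsReflect α (R.nonzero α hα) x y
  | one => simp
  | mul a b _ _ ha hb =>
      show ⟪a (b x), a (b y)⟫ = _
      rw [ha, hb]
  | inv a _ ha =>
      have := ha (a⁻¹ x) (a⁻¹ y)
      rw [show a (a⁻¹ x) = x from a.apply_symm_apply x,
        show a (a⁻¹ y) = y from a.apply_symm_apply y] at this
      exact this.symm

lemma weyl_root_mem {w : V ≃ₗ[ℝ] V} (hw : w ∈ R.weyl) {α : V} (hα : α ∈ R.Φ) :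
    w α ∈ R.Φ := by
  suffices h : (∀ β ∈ R.Φ, w β ∈ R.Φ) ∧ (∀ β ∈ R.Φ, w⁻¹ β ∈ R.Φ) from h.1 α hα
  clear hα
  induction hw using Subgroup.closure_induction with
  | mem w hw =>
      obtain ⟨γ, hγ, hwγ⟩ := hw
      have hfwd : ∀ β ∈ R.Φ, w β ∈ R.Φ := fun β hβ => by
        rw [hwγ]; exact R.reflect_mem γ hγ β hβ
      refine ⟨hfwd, fun β hβ => ?_⟩
      have hinv : w⁻¹ β = w β := by
        have h2 : w (w β) = β := by
          rw [hwγ, hwγ]; exact rsReflect_involutive γ (R.nonzero γ hγ) β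
        calc w⁻¹ β = w⁻¹ (w (w β)) := by rw [h2]
        _ = w β := w.symm_apply_apply _
      rw [hinv]; exact hfwd β hβ
  | one => exact ⟨fun β hβ => hβ, by simpa using fun β hβ => hβ⟩
  | mul a b _ _ ha hb =>
      refine ⟨fun β hβ => ?_, fun β hβ => ?_⟩
      · exact ha.1 _ (hb.1 β hβ)
      · show b⁻¹ (a⁻¹ β) ∈ R.Φ
        exact hb.2 _ (ha.2 β hβ)
  | inv a _ ha =>
      refine ⟨fun β hβ => ha.2 β hβ, fun β hβ => ?_⟩
      show a β ∈ R.Φ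
      exact ha.1 β hβ

/-- The Weyl group is finite. -/
lemma weyl_finite : Finite ↥R.weyl := by
  haveI : Finite ↥R.Φ := R.finite.to_subtype
  have hinj : Function.Injective
      (fun (w : ↥R.weyl) (α : ↥R.Φ) => (⟨w.1 α.1, R.weyl_root_mem w.2 α.2⟩ : ↥R.Φ)) := by
    intro w w' h
    have h' : Set.EqOn ⇑w.1.toLinearMap ⇑w'.1.toLinearMap R.Φ := by
      intro α hα
      have := congrFun h ⟨α, hα⟩
      exact congrArg Subtype.val this
    have : w.1.toLinearMap = w'.1.toLinearMap :=
      LinearMap.ext_on R.spans h'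
    exact Subtype.ext (LinearEquiv.toLinearMap_injective this)
  exact Finite.of_injective _ hinj

end RootSystemData

namespace RootSystemData

variable {V : Type*} [NormedAddCommGroup V] [InnerProductSpace ℝ V] {n : ℕ}
variable [FiniteDimensional ℝ V] (R : RootSystemData V n)

/-- There is a vector pairing to `1` with every simple root. -/
lemma exists_rho : ∃ ρ : V, ∀ i, ⟪ρ, R.simple i⟫ = 1 := by
  haveI : CompleteSpace V := FiniteDimensional.complete ℝ V
  set b : Module.Basis (Fin n) ℝ V := Module.Basis.mk R.simple_indep (by rw [R.simple_span]) with hb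
  refine ⟨(InnerProductSpace.toDual ℝ V).symm
    (LinearMap.toContinuousLinearMap b.sumCoords), fun i => ?_⟩
  rw [InnerProductSpace.toDual_symm_apply]
  have : (R.simple i) = b i := by rw [hb, Module.Basis.mk_apply]
  rw [this]
  simp [Module.Basis.sumCoords, Finset.sum_apply']

/-- Every vector has a dominant representative in its Weyl orbit. -/
lemma exists_dom_rep (x : V) : ∃ w ∈ R.weyl, R.IsDomVec (w x) := by
  obtain ⟨ρ, hρ⟩ := R.exists_rho
  haveI : Finite ↥R.weyl := R.weyl_finite
  haveI : Nonempty ↥R.weyl := ⟨1, one_mem _⟩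
  obtain ⟨w₀, hw₀⟩ := Finite.exists_max (fun w : ↥R.weyl => ⟪(w.1 : V ≃ₗ[ℝ] V) x, ρ⟫)
  refine ⟨w₀.1, w₀.2, fun i => ?_⟩
  set α := R.simple i with hαdef
  have hαΦ : α ∈ R.Φ := R.simple_mem i
  have hα0 : α ≠ 0 := R.nonzero α hαΦ
  set s : V ≃ₗ[ℝ] V := reflEquiv α hα0 with hs
  have hsw : s * w₀.1 ∈ R.weyl := mul_mem (R.reflEquiv_mem_weyl hαΦ) w₀.2
  have := hw₀ ⟨s * w₀.1, hsw⟩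
  simp only at this
  have hkey : ⟪s (w₀.1 x), ρ⟫ ≤ ⟪w₀.1 x, ρ⟫ := this
  set y := w₀.1 x
  have hexp : ⟪s y, ρ⟫ = ⟪y, ρ⟫ - ⟪y, corootOf α⟫ * ⟪α, ρ⟫ := by
    simp [hs, rsReflect, inner_sub_left, real_inner_smul_left]
  have hαρ : ⟪α, ρ⟫ = 1 := by rw [real_inner_comm]; exact hρ i
  rw [hexp, hαρ, mul_one, sub_le_self_iff] at hkey
  exact hkey

end RootSystemData

section Generic

variable {V : Type*} [NormedAddCommGroup V] [InnerProductSpace ℝ V]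

/-- Escape finitely many hyperplanes inside `Uᗮ`. -/
lemma exists_generic_perp [FiniteDimensional ℝ V] (U : Submodule ℝ V) (S : Finset V)
    (hS : ∀ α ∈ S, α ∉ U) : ∃ z ∈ Uᗮ, ∀ α ∈ S, ⟪z, α⟫ ≠ 0 := by
  classical
  induction S using Finset.induction_on with
  | empty => exact ⟨0, zero_mem _, by simp⟩
  | @insert a S ha ih =>
      obtain ⟨z, hzU, hz⟩ := ih (fun α hα => hS α (Finset.mem_insert_of_mem hα))
      have haU : a ∉ U := hS a (Finset.mem_insert_self a S)
      have haU' : a ∉ Uᗮᗮ := by rwa [Submodule.orthogonal_orthogonal]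
      rw [Submodule.mem_orthogonal] at haU'
      push_neg at haU'
      obtain ⟨y, hyU, hya⟩ := haU'
      obtain ⟨t, ht⟩ := Infinite.exists_notMem_finset
        ((insert a S).image (fun β => -⟪z, β⟫ / ⟪y, β⟫))
      refine ⟨z + t • y, add_mem hzU (Submodule.smul_mem _ _ hyU), fun β hβ => ?_⟩
      intro h0
      rw [inner_add_left, real_inner_smul_left] at h0
      by_cases hyβ : ⟪y, β⟫ = 0
      · rw [hyβ, mul_zero, add_zero] at h0
        rcases Finset.mem_insert.mp hβ with rfl | hβS
        · exact hya hyβ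
        · exact hz β hβS h0
      · apply ht
        refine Finset.mem_image.mpr ⟨β, hβ, ?_⟩
        field_simp
        linarith
end Generic

namespace RootSystemData

variable {V : Type*} [NormedAddCommGroup V] [InnerProductSpace ℝ V] {n : ℕ}
variable (R : RootSystemData V n)

lemma inner_simple_nonneg {y : V} (hy : R.IsDomVec y) (i : Fin n) :
    0 ≤ ⟪y, R.simple i⟫ := by
  have h := hy i
  rw [inner_corootOf] at h
  have hpos : 0 < ⟪R.simple i, R.simple i⟫ :=
    inner_self_pos_of_ne (R.nonzero _ (R.simple_mem i))
  have h2 : 0 < 2 / ⟪R.simple i, R.simple i⟫ := by positivity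
  by_contra hq
  push_neg at hq
  exact absurd h (not_le.mpr (mul_neg_of_pos_of_neg h2 hq))

/-- If `y` is dominant and `⟪y, α⟫ = 0` for a root `α`, then `α` lies in the span of the
simple roots that pair to zero with `y`. -/
lemma dom_zero_mem_span {y : V} (hy : R.IsDomVec y) {α : V} (hα : α ∈ R.Φ)
    (h0 : ⟪y, α⟫ = 0) :
    α ∈ Submodule.span ℝ (R.simple '' {i | ⟪y, corootOf (R.simple i)⟫ = 0}) := by
  have key : ∀ c : Fin n → ℕ, ⟪y, ∑ i, (c i : ℝ) • R.simple i⟫ = 0 →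
      (∑ i, (c i : ℝ) • R.simple i) ∈
        Submodule.span ℝ (R.simple '' {i | ⟪y, corootOf (R.simple i)⟫ = 0}) := by
    intro c hc
    rw [inner_sum] at hc
    simp only [real_inner_smul_right] at hc
    have hterm : ∀ i ∈ Finset.univ, (c i : ℝ) * ⟪y, R.simple i⟫ = 0 :=
      (Finset.sum_eq_zero_iff_of_nonneg
        (fun i _ => mul_nonneg (Nat.cast_nonneg _) (R.inner_simple_nonneg hy i))).mp hc
    refine Submodule.sum_mem _ (fun i _ => ?_)
    by_cases hci : (c i : ℝ) = 0
    · rw [hci, zero_smul]; exact zero_mem _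
    · have hyi : ⟪y, R.simple i⟫ = 0 := by
        have := hterm i (Finset.mem_univ i)
        exact (mul_eq_zero.mp this).resolve_left hci
      refine Submodule.smul_mem _ _ (Submodule.subset_span ⟨i, ?_, rfl⟩)
      show ⟪y, corootOf (R.simple i)⟫ = 0
      rw [inner_corootOf, hyi, mul_zero]
  rcases R.root_combo α hα with ⟨c, hcα⟩ | ⟨c, hcα⟩
  · rw [hcα]; exact key c (by rw [← hcα]; exact h0)
  · have : (∑ i, (c i : ℝ) • R.simple i) ∈ _ := key c (by
      have : ⟪y, ∑ i, (c i : ℝ) • R.simple i⟫ = -⟪y, α⟫ := by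
        rw [hcα, inner_neg_right, neg_neg]
      rw [this, h0, neg_zero])
    rw [hcα]
    exact neg_mem this
end RootSystemData

section Eps

variable {V : Type*} [NormedAddCommGroup V] [InnerProductSpace ℝ V]

lemma exists_eps_bound (Φ' : Finset V) (v z : V) :
    ∃ ε₀ : ℝ, 0 < ε₀ ∧ ∀ ε : ℝ, 0 < ε → ε ≤ ε₀ → ∀ α ∈ Φ', ⟪v, α⟫ ≠ 0 →
      ⟪v + ε • z, α⟫ ≠ 0 := by
  classical
  set f : V → ℝ := fun α => if ⟪v, α⟫ = 0 then 1 else |⟪v, α⟫| / (|⟪z, α⟫| + 1) with hf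
  set T : Finset ℝ := insert 1 (Φ'.image f) with hT
  have hTne : T.Nonempty := ⟨1, Finset.mem_insert_self 1 _⟩
  have hpos : ∀ x ∈ T, 0 < x := by
    intro x hx
    rcases Finset.mem_insert.mp hx with rfl | hx
    · norm_num
    · obtain ⟨α, hα, rfl⟩ := Finset.mem_image.mp hx
      by_cases h : ⟪v, α⟫ = 0
      · simp [hf, h]
      · have h1 : 0 < |⟪v, α⟫| := abs_pos.mpr h
        have h2 : 0 < |⟪z, α⟫| + 1 := by positivity
        simp only [hf, if_neg h]
        positivity
  refine ⟨T.min' hTne, hpos _ (T.min'_mem hTne), fun ε hε hεle α hα hvα h0 => ?_⟩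
  have hεf : ε ≤ f α :=
    le_trans hεle (T.min'_le _ (Finset.mem_insert_of_mem (Finset.mem_image_of_mem f hα)))
  rw [hf] at hεf
  simp only [if_neg hvα] at hεf
  rw [inner_add_left, real_inner_smul_left] at h0
  have habs : |⟪v, α⟫| = ε * |⟪z, α⟫| := by
    have : ⟪v, α⟫ = -(ε * ⟪z, α⟫) := by linarith
    rw [this, abs_neg, abs_mul, abs_of_pos hε]
  have hεb : ε * (|⟪z, α⟫| + 1) ≤ |⟪v, α⟫| :=
    (le_div_iff₀ (by positivity)).mp hεf
  have : 0 < |⟪v, α⟫| := abs_pos.mpr hvα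
  nlinarith

end Eps

/-- Proposition 2.1: if `π_X(v) = 0` then some `w ∈ W` carries
`Span_ℝ(X)` to a parabolic subspace while making `v` dominant. -/
theorem parabolic_subspace {V : Type*} [NormedAddCommGroup V] [InnerProductSpace ℝ V]
    [FiniteDimensional ℝ V]
    {n : ℕ} (R : RootSystemData V n) (X : Set V) (hX : X ⊆ R.Pos) (v : V)
    (hv : ((Submodule.orthogonalProjection (Submodule.span ℝ X) v : Submodule.span ℝ X) : V) = 0) :
    ∃ w ∈ R.weyl, ∃ I : Set (Fin n),
      ⇑w '' (Submodule.span ℝ X : Set V) = (Submodule.span ℝ (R.simple '' I) : Set V) ∧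
      R.IsDomVec (w v) := by
  classical
  set U : Submodule ℝ V := Submodule.span ℝ X with hUdef
  have hvU : v ∈ Uᗮ := by
    rw [← Submodule.orthogonalProjectionOnto_eq_zero_iff]
    exact (ZeroMemClass.coe_eq_zero).mp hv
  have hXΦ : X ⊆ R.Φ := fun x hx => (hX hx).1
  have hXU : X ⊆ (U : Set V) := Submodule.subset_span
  -- generic z in Uᗮ
  obtain ⟨z, hzU, hzgen'⟩ := exists_generic_perp U
    (R.finite.toFinset.filter (fun α => α ∉ U))
    (fun α hα => (Finset.mem_filter.mp hα).2)
  have hzgen : ∀ α ∈ R.Φ, α ∉ U → ⟪z, α⟫ ≠ 0 := fun α hα hαU =>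
    hzgen' α (Finset.mem_filter.mpr ⟨R.finite.mem_toFinset.mpr hα, hαU⟩)
  -- epsilon bound
  obtain ⟨ε₀, hε₀pos, hε₀⟩ := exists_eps_bound R.finite.toFinset v z
  -- key property of z_ε
  have hzero : ∀ ε : ℝ, 0 < ε → ε ≤ ε₀ → ∀ α ∈ R.Φ, (⟪v + ε • z, α⟫ = 0 ↔ α ∈ U) := by
    intro ε hε hεle α hαΦ
    constructor
    · intro h0
      by_contra hαU
      by_cases hvα : ⟪v, α⟫ = 0
      · rw [inner_add_left, real_inner_smul_left, hvα, zero_add] at h0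
        exact hzgen α hαΦ hαU (by
          rcases mul_eq_zero.mp h0 with h | h
          · exact absurd h (ne_of_gt hε)
          · exact h)
      · exact hε₀ ε hε hεle α (R.finite.mem_toFinset.mpr hαΦ) hvα h0
    · intro hαU
      have h1 : ⟪v, α⟫ = 0 := by
        rw [real_inner_comm]; exact (Submodule.mem_orthogonal U v).mp hvU α hαU
      have h2 : ⟪z, α⟫ = 0 := by
        rw [real_inner_comm]; exact (Submodule.mem_orthogonal U z).mp hzU α hαU
      rw [inner_add_left, real_inner_smul_left, h1, h2, mul_zero, add_zero]
  -- the sequence of epsilons and dominant representatives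
  set εf : ℕ → ℝ := fun m => ε₀ / ((m : ℝ) + 1) with hεf
  have hεfpos : ∀ m, 0 < εf m := fun m => by positivity
  have hεfle : ∀ m, εf m ≤ ε₀ := fun m => by
    rw [hεf]
    exact div_le_self (le_of_lt hε₀pos) (by norm_num)
  have hrep : ∀ m : ℕ, ∃ w ∈ R.weyl, R.IsDomVec (w (v + εf m • z)) := fun m =>
    R.exists_dom_rep (v + εf m • z)
  choose wseq hwseq hwdom using hrep
  haveI : Finite ↥R.weyl := R.weyl_finite
  set F : ℕ → ↥R.weyl := fun m => ⟨wseq m, hwseq m⟩ with hF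
  obtain ⟨wbar, hwbar⟩ := Finite.exists_infinite_fiber F
  have hM : (F ⁻¹' {wbar}).Infinite := Set.infinite_coe_iff.mp hwbar
  set w : V ≃ₗ[ℝ] V := wbar.1 with hw
  have hwW : w ∈ R.weyl := wbar.2
  have hdomM : ∀ m ∈ F ⁻¹' {wbar}, R.IsDomVec (w (v + εf m • z)) := by
    intro m hm
    have heq : wseq m = w := congrArg Subtype.val (show F m = wbar from hm)
    rw [← heq]
    exact hwdom m
  -- dominance of w v
  have hdomv : R.IsDomVec (w v) := by
    intro i
    set a : ℝ := ⟪w v, corootOf (R.simple i)⟫ with ha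
    set b : ℝ := ⟪w z, corootOf (R.simple i)⟫ with hb
    have hab : ∀ m ∈ F ⁻¹' {wbar}, 0 ≤ a + εf m * b := by
      intro m hm
      have h := hdomM m hm i
      rwa [map_add, map_smul, inner_add_left, real_inner_smul_left] at h
    by_contra hq
    push_neg at hq
    obtain ⟨m, hm, hmgt⟩ := hM.exists_gt ⌈ε₀ * (|b| + 1) / (-a)⌉₊
    have hceil : ε₀ * (|b| + 1) / (-a) ≤ (⌈ε₀ * (|b| + 1) / (-a)⌉₊ : ℝ) := Nat.le_ceil _
    have hmR : ε₀ * (|b| + 1) / (-a) < (m : ℝ) + 1 := by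
      have : (⌈ε₀ * (|b| + 1) / (-a)⌉₊ : ℝ) < (m : ℝ) := by exact_mod_cast hmgt
      linarith
    have h1 : ε₀ * (|b| + 1) < ((m : ℝ) + 1) * (-a) :=
      (div_lt_iff₀ (by linarith)).mp hmR
    have h2 : εf m * (|b| + 1) < -a := by
      rw [hεf]
      rw [div_mul_eq_mul_div, div_lt_iff₀ (by positivity : (0:ℝ) < (m : ℝ) + 1)]
      linarith
    have h3 : εf m * b ≤ εf m * (|b| + 1) :=
      mul_le_mul_of_nonneg_left (by linarith [le_abs_self b]) (le_of_lt (hεfpos m))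
    have h4 := hab m hm
    linarith
  -- the span part
  obtain ⟨m₀, hm₀⟩ := hM.nonempty
  set z' : V := v + εf m₀ • z with hz'
  have hdomz' : R.IsDomVec (w z') := hdomM m₀ hm₀
  have hzero' : ∀ α ∈ R.Φ, (⟪z', α⟫ = 0 ↔ α ∈ U) :=
    hzero (εf m₀) (hεfpos m₀) (hεfle m₀)
  set I : Set (Fin n) := {i | ⟪w z', corootOf (R.simple i)⟫ = 0} with hI
  refine ⟨w, hwW, I, ?_, hdomv⟩
  -- U = span (Φ ∩ U)
  have hUspan : U = Submodule.span ℝ (R.Φ ∩ (U : Set V)) := by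
    refine le_antisymm ?_ (Submodule.span_le.mpr Set.inter_subset_right)
    rw [hUdef]
    exact Submodule.span_mono (fun x hx => ⟨hXΦ hx, hXU hx⟩)
  set Z : Set V := {α | α ∈ R.Φ ∧ ⟪w z', α⟫ = 0} with hZdef
  have hZ : ⇑w '' (R.Φ ∩ (U : Set V)) = Z := by
    ext β
    constructor
    · rintro ⟨α, ⟨hαΦ, hαU⟩, rfl⟩
      refine ⟨R.weyl_root_mem hwW hαΦ, ?_⟩
      rw [R.weyl_inner hwW z' α]
      exact (hzero' α hαΦ).mpr hαU
    · rintro ⟨hβΦ, hβ0⟩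
      have hαΦ : w⁻¹ β ∈ R.Φ := R.weyl_root_mem (inv_mem hwW) hβΦ
      have hwα : w (w⁻¹ β) = β := w.apply_symm_apply β
      refine ⟨w⁻¹ β, ⟨hαΦ, ?_⟩, hwα⟩
      refine (hzero' _ hαΦ).mp ?_
      rw [← R.weyl_inner hwW z' (w⁻¹ β), hwα]
      exact hβ0
  have hspanZ : Submodule.span ℝ Z = Submodule.span ℝ (R.simple '' I) := by
    refine le_antisymm (Submodule.span_le.mpr ?_) (Submodule.span_mono ?_)
    · rintro α ⟨hαΦ, hα0⟩
      exact R.dom_zero_mem_span hdomz' hαΦ hα0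
    · rintro β ⟨i, hi, rfl⟩
      refine ⟨R.simple_mem i, ?_⟩
      have hcor : ⟪w z', corootOf (R.simple i)⟫ = 0 := hi
      rw [inner_corootOf] at hcor
      rcases mul_eq_zero.mp hcor with h | h
      · exact absurd h (div_ne_zero two_ne_zero (R.inner_self_ne_zero_of_mem (R.simple_mem i)))
      · exact h
  have hmap : Submodule.map w.toLinearMap U = Submodule.span ℝ (R.simple '' I) := by
    rw [hUspan, Submodule.map_span, show ⇑w.toLinearMap '' (R.Φ ∩ (U : Set V))
      = ⇑w '' (R.Φ ∩ (U : Set V)) from rfl, hZ, hspanZ]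
  calc ⇑w '' (U : Set V) = ⇑w.toLinearMap '' (U : Set V) := rfl
    _ = ↑(Submodule.map w.toLinearMap U) := (Submodule.map_coe _ _).symm
    _ = ↑(Submodule.span ℝ (R.simple '' I)) := by rw [hmap]
end

section
/- Let a = (1,…,1,0,…,0) ∈ ℤ^{n+1} have i ones followed by n+1−i zeros, where 1 ≤ i ≤ n+1, and let λ ⊢ n+1 be a partition of n+1. Then #quot_λ(Π(a) ∩ ℤ^{n+1}) equals the number of tuples (μ_1,…,μ_{ℓ(λ)}) ∈ ℤ_{≥0}^{ℓ(λ)} with μ_j ≤ λ_j for all j and Σ_j μ_j = i, i.e., the number of compositions of i whose diagram fits inside the Young diagram of λ. -/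
/-- The lattice `ℤ^n` inside `ℝ^n`. -/
def intLattice (n : ℕ) : Set (Fin n → ℝ) := {v | ∀ i, ∃ z : ℤ, v i = (z : ℝ)}

/-- The permutohedron `Π(a) ⊆ ℝ^{n+1}`: the convex hull of the coordinate
permutations of `a`. -/
noncomputable def permA {n : ℕ} (a : Fin (n + 1) → ℝ) : Set (Fin (n + 1) → ℝ) :=
  convexHull ℝ {x | ∃ σ : Equiv.Perm (Fin (n + 1)), x = fun i => a (σ i)}

/-- For a partition with parts `lam 0 ≥ lam 1 ≥ …` (of length `l`), the quotient map
`quot_λ : ℝ^{n+1} ↠ ℝ^{ℓ(λ)}` whose `j`-th coordinate is the sum of the entries over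
the `j`-th consecutive block of sizes `lam 0, …, lam (l-1)`. -/
noncomputable def quotPart {n : ℕ} (l : ℕ) (lam : Fin l → ℕ) (b : Fin (n + 1) → ℝ) :
    Fin l → ℝ :=
  fun j => ∑ i ∈ Finset.univ.filter (fun i : Fin (n + 1) =>
      (∑ j' ∈ Finset.univ.filter (fun j' : Fin l => j' < j), lam j') ≤ i.1 ∧
        i.1 < (∑ j' ∈ Finset.univ.filter (fun j' : Fin l => j' < j), lam j') + lam j),
    b i

open Finset

lemma finCardFilterIco {m : ℕ} (a b : ℕ) (hb : b ≤ m) :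
    (Finset.univ.filter fun t : Fin m => a ≤ t.1 ∧ t.1 < b).card = b - a := by
  rw [← Nat.card_Ico a b]
  apply Finset.card_nbij (i := Fin.val)
  · intro t ht
    simp only [Finset.mem_coe, Finset.mem_filter, Finset.mem_univ, true_and] at ht
    simp [Finset.mem_Ico, ht.1, ht.2]
  · intro x _ y _ h; exact Fin.val_injective h
  · intro x hx
    simp only [Finset.mem_Ico, Finset.coe_Ico, Set.mem_Ico] at hx
    exact ⟨⟨x, lt_of_lt_of_le hx.2 hb⟩, by simp [hx.1, hx.2], rfl⟩

def Spre {l : ℕ} (lam : Fin l → ℕ) (m : ℕ) : ℕ :=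
  ∑ j ∈ Finset.univ.filter (fun j : Fin l => j.1 < m), lam j

lemma Spre_zero {l : ℕ} (lam : Fin l → ℕ) : Spre lam 0 = 0 := by
  simp [Spre]

lemma Spre_succ {l : ℕ} (lam : Fin l → ℕ) (m : ℕ) (hm : m < l) :
    Spre lam (m + 1) = Spre lam m + lam ⟨m, hm⟩ := by
  unfold Spre
  have : (Finset.univ.filter (fun j : Fin l => j.1 < m + 1)) =
      insert ⟨m, hm⟩ (Finset.univ.filter (fun j : Fin l => j.1 < m)) := by
    ext j
    simp only [Finset.mem_filter, Finset.mem_univ, true_and, Finset.mem_insert]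
    constructor
    · intro h
      rcases Nat.lt_succ_iff_lt_or_eq.1 h with h | h
      · exact Or.inr h
      · exact Or.inl (Fin.ext h)
    · rintro (rfl | h)
      · simp
      · omega
  rw [this, Finset.sum_insert (by simp)]
  ring

lemma Spre_mono {l : ℕ} (lam : Fin l → ℕ) : Monotone (Spre lam) := by
  intro a b hab
  apply Finset.sum_le_sum_of_subset
  intro j hj
  simp only [Finset.mem_filter, Finset.mem_univ, true_and] at hj ⊢
  omega


lemma Spre_top {l : ℕ} (lam : Fin l → ℕ) {m : ℕ} (hm : l ≤ m) :
    Spre lam m = ∑ j, lam j := by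
  unfold Spre
  congr 1
  ext j
  simp only [Finset.mem_filter, Finset.mem_univ, true_and, iff_true]
  have := j.2
  omega

lemma blk_exists_unique {n l : ℕ} (lam : Fin l → ℕ) (hsum : ∑ j, lam j = n + 1)
    (t : Fin (n + 1)) :
    ∃! j : Fin l, Spre lam j.1 ≤ t.1 ∧ t.1 < Spre lam (j.1 + 1) := by
  have hl : 0 < l := by
    rcases Nat.eq_zero_or_pos l with h | h
    · subst h; simp at hsum
    · exact h
  have hP : ∃ m : ℕ, t.1 < Spre lam (m + 1) := by
    refine ⟨l - 1, ?_⟩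
    have : Spre lam (l - 1 + 1) = n + 1 := by
      rw [Spre_top lam (by omega), hsum]
    omega
  classical
  set j0 := Nat.find hP with hj0
  have hspec : t.1 < Spre lam (j0 + 1) := Nat.find_spec hP
  have hj0l : j0 < l := by
    by_contra h
    push_neg at h
    have h1 : Spre lam (l - 1 + 1) = n + 1 := by rw [Spre_top lam (by omega), hsum]
    have := Nat.find_min' hP (m := l - 1) (by omega)
    omega
  have hlow : Spre lam j0 ≤ t.1 := by
    rcases Nat.eq_zero_or_pos j0 with h | h
    · rw [h, Spre_zero]; omega
    · have := Nat.find_min hP (m := j0 - 1) (by omega)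
      push_neg at this
      have : Spre lam (j0 - 1 + 1) ≤ t.1 := this
      have he : j0 - 1 + 1 = j0 := by omega
      rwa [he] at this
  refine ⟨⟨j0, hj0l⟩, ⟨hlow, hspec⟩, ?_⟩
  rintro ⟨j, hjl⟩ ⟨h1, h2⟩
  simp only [Fin.val_mk] at h1 h2
  apply Fin.ext
  simp only [Fin.val_mk]
  by_contra hne
  rcases Nat.lt_or_ge j j0 with h | h
  · have := Spre_mono lam (show j + 1 ≤ j0 by omega)
    omega
  · have := Spre_mono lam (show j0 + 1 ≤ j by omega)
    omega

noncomputable def blk {n l : ℕ} (lam : Fin l → ℕ) (hsum : ∑ j, lam j = n + 1)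
    (t : Fin (n + 1)) : Fin l :=
  (blk_exists_unique lam hsum t).exists.choose

lemma blk_spec {n l : ℕ} (lam : Fin l → ℕ) (hsum : ∑ j, lam j = n + 1) (t : Fin (n + 1)) :
    Spre lam (blk lam hsum t).1 ≤ t.1 ∧ t.1 < Spre lam ((blk lam hsum t).1 + 1) :=
  (blk_exists_unique lam hsum t).exists.choose_spec

lemma blk_eq_iff {n l : ℕ} (lam : Fin l → ℕ) (hsum : ∑ j, lam j = n + 1)
    (t : Fin (n + 1)) (j : Fin l) :
    blk lam hsum t = j ↔ (Spre lam j.1 ≤ t.1 ∧ t.1 < Spre lam (j.1 + 1)) := by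
  constructor
  · rintro rfl; exact blk_spec lam hsum t
  · intro h
    exact ((blk_exists_unique lam hsum t).unique (blk_spec lam hsum t) h)

/-- The `j`-th block of `Fin (n+1)`. -/
def Block {n l : ℕ} (lam : Fin l → ℕ) (j : Fin l) : Finset (Fin (n + 1)) :=
  Finset.univ.filter (fun t => Spre lam j.1 ≤ t.1 ∧ t.1 < Spre lam (j.1 + 1))

lemma quotPart_eq {n : ℕ} (l : ℕ) (lam : Fin l → ℕ) (b : Fin (n + 1) → ℝ) (j : Fin l) :
    quotPart l lam b j = ∑ t ∈ Block lam j, b t := by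
  unfold quotPart Block
  have h1 : (Finset.univ.filter (fun j' : Fin l => j' < j)) =
      (Finset.univ.filter (fun j' : Fin l => j'.1 < j.1)) := by
    apply Finset.filter_congr
    intro x _
    exact Iff.rfl
  have h2 : Spre lam (j.1 + 1) = Spre lam j.1 + lam j := by
    rw [Spre_succ lam j.1 j.2]
  rw [h1]
  congr 1
  apply Finset.filter_congr
  intro t _
  show (Spre lam j.1 ≤ t.1 ∧ t.1 < Spre lam j.1 + lam j) ↔
      (Spre lam j.1 ≤ t.1 ∧ t.1 < Spre lam (j.1 + 1))
  rw [h2]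

lemma card_Block {n l : ℕ} (lam : Fin l → ℕ) (hsum : ∑ j, lam j = n + 1) (j : Fin l) :
    (Block lam j : Finset (Fin (n+1))).card = lam j := by
  unfold Block
  have hb : Spre lam (j.1 + 1) ≤ n + 1 := by
    rw [← hsum, ← Spre_top lam (le_refl l)]
    exact Spre_mono lam j.2
  rw [finCardFilterIco _ _ hb, Spre_succ lam j.1 j.2]
  simp only [Fin.eta]
  omega

lemma sum01_eq_card {n : ℕ} (x : Fin (n + 1) → ℝ) (h01 : ∀ t, x t = 0 ∨ x t = 1)
    (s : Finset (Fin (n + 1))) [DecidablePred (fun t => x t = 1)] :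
    ∑ t ∈ s, x t = (s.filter (fun t => x t = 1)).card := by
  rw [← Finset.sum_filter_add_sum_filter_not s (fun t => x t = 1)]
  have h1 : ∑ t ∈ s.filter (fun t => x t = 1), x t =
      (s.filter (fun t => x t = 1)).card := by
    rw [Finset.sum_congr rfl (fun t ht => (Finset.mem_filter.1 ht).2)]
    simp
  have h2 : ∑ t ∈ s.filter (fun t => ¬ x t = 1), x t = 0 := by
    apply Finset.sum_eq_zero
    intro t ht
    rcases h01 t with h | h
    · exact h
    · exact absurd h (Finset.mem_filter.1 ht).2
  rw [h1, h2, add_zero]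

lemma filter_blk_eq {n l : ℕ} (lam : Fin l → ℕ) (hsum : ∑ j, lam j = n + 1)
    (x : Fin (n + 1) → ℝ) (j : Fin l) [DecidablePred (fun t => x t = 1)] :
    ((Finset.univ.filter (fun t : Fin (n+1) => x t = 1)).filter
        (fun t => blk lam hsum t = j)) =
      (Block lam j).filter (fun t => x t = 1) := by
  ext t
  simp only [Finset.mem_filter, Finset.mem_univ, true_and, Block,
    blk_eq_iff lam hsum t j]
  tauto

open scoped Classical

lemma card_filter_lt {n i : ℕ} (hi2 : i ≤ n + 1) :
    (Finset.univ.filter (fun t : Fin (n+1) => t.1 < i)).card = i := by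
  have he : (Finset.univ.filter (fun t : Fin (n+1) => t.1 < i)) =
      (Finset.univ.filter (fun t : Fin (n+1) => 0 ≤ t.1 ∧ t.1 < i)) := by
    apply Finset.filter_congr; intro t _; simp
  rw [he, finCardFilterIco 0 i hi2]
  omega

lemma mem_permA_of_01 {n i : ℕ} (hi2 : i ≤ n + 1) (x : Fin (n+1) → ℝ)
    (h01 : ∀ t, x t = 0 ∨ x t = 1)
    (hcard : (Finset.univ.filter (fun t => x t = 1)).card = i) :
    x ∈ permA (fun t : Fin (n + 1) => if (t : ℕ) < i then (1 : ℝ) else 0) := by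
  apply subset_convexHull
  have hq := card_filter_lt hi2
  have hc : Fintype.card {t : Fin (n+1) // x t = 1} =
      Fintype.card {t : Fin (n+1) // t.1 < i} := by
    rw [Fintype.card_subtype, Fintype.card_subtype, hcard, hq]
  let e := Fintype.equivOfCardEq hc
  refine ⟨e.extendSubtype, ?_⟩
  funext t
  by_cases h : x t = 1
  · have hm := Equiv.extendSubtype_mem e t h
    simp only [hm, if_pos]
    exact h
  · have hm := Equiv.extendSubtype_not_mem e t h
    rcases h01 t with h0 | h1
    · simp only [hm, if_neg]
      exact h0
    · exact absurd h1 h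

lemma permA_subset {n i : ℕ} (hi2 : i ≤ n + 1) :
    permA (fun t : Fin (n + 1) => if (t : ℕ) < i then (1 : ℝ) else 0) ⊆
      {x | (∀ t, 0 ≤ x t ∧ x t ≤ 1) ∧ ∑ t, x t = i} := by
  apply convexHull_min
  · rintro x ⟨σ, rfl⟩
    constructor
    · intro t; dsimp only; split_ifs <;> norm_num
    · have hs := Equiv.sum_comp σ (fun t : Fin (n+1) => if (t:ℕ) < i then (1:ℝ) else 0)
      dsimp only
      rw [hs, Finset.sum_boole]
      norm_cast
      exact card_filter_lt hi2
  · intro x hx y hy a b ha hb hab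
    refine ⟨fun t => ?_, ?_⟩
    · obtain ⟨h1, h2⟩ := hx.1 t
      obtain ⟨h3, h4⟩ := hy.1 t
      constructor
      · have : 0 ≤ a * x t + b * y t := by nlinarith
        simpa using this
      · have : a * x t + b * y t ≤ 1 := by nlinarith
        simpa using this
    · have hsum : ∑ t, (a • x + b • y) t = a * ∑ t, x t + b * ∑ t, y t := by
        simp [Finset.sum_add_distrib, Finset.mul_sum]
      rw [hsum, hx.2, hy.2]
      linear_combination (i : ℝ) * hab

lemma permA_inter_lattice {n i : ℕ} (hi2 : i ≤ n + 1) :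
    permA (fun t : Fin (n + 1) => if (t : ℕ) < i then (1 : ℝ) else 0) ∩
        intLattice (n + 1) =
      {x | (∀ t, x t = 0 ∨ x t = 1) ∧
        (Finset.univ.filter (fun t => x t = 1)).card = i} := by
  ext x
  constructor
  · rintro ⟨hp, hl⟩
    obtain ⟨hbd, hs⟩ := permA_subset hi2 hp
    have h01 : ∀ t, x t = 0 ∨ x t = 1 := by
      intro t
      obtain ⟨z, hz⟩ := hl t
      obtain ⟨h1, h2⟩ := hbd t
      rw [hz] at h1 h2 ⊢
      have hz0 : (0:ℤ) ≤ z := by exact_mod_cast h1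
      have hz1 : z ≤ 1 := by exact_mod_cast h2
      interval_cases z <;> simp
    refine ⟨h01, ?_⟩
    have := sum01_eq_card x h01 Finset.univ
    rw [hs] at this
    exact_mod_cast this.symm
  · rintro ⟨h01, hcard⟩
    refine ⟨mem_permA_of_01 hi2 x h01 hcard, ?_⟩
    intro t
    rcases h01 t with h | h
    · exact ⟨0, by simp [h]⟩
    · exact ⟨1, by simp [h]⟩

lemma image_eq {n i l : ℕ} (hi2 : i ≤ n + 1) (lam : Fin l → ℕ)
    (hle' : ∀ j, 0 < lam j) (hsum : ∑ j, lam j = n + 1) :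
    quotPart l lam ''
        (permA (fun t : Fin (n + 1) => if (t : ℕ) < i then (1 : ℝ) else 0) ∩
          intLattice (n + 1)) =
      (fun μ : Fin l → ℕ => fun j => (μ j : ℝ)) ''
        {μ : Fin l → ℕ | (∀ j, μ j ≤ lam j) ∧ ∑ j, μ j = i} := by
  rw [permA_inter_lattice hi2]
  ext v
  constructor
  · rintro ⟨x, ⟨h01, hcard⟩, rfl⟩
    refine ⟨fun j => ((Block lam j).filter (fun t => x t = 1)).card, ⟨?_, ?_⟩, ?_⟩
    · intro j
      calc ((Block lam j).filter (fun t => x t = 1)).card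
          ≤ (Block lam j).card := Finset.card_filter_le _ _
        _ = lam j := card_Block lam hsum j
    · rw [← hcard]
      rw [Finset.card_eq_sum_card_fiberwise
        (f := blk lam hsum) (t := Finset.univ) (fun t _ => Finset.mem_univ _)]
      apply Finset.sum_congr rfl
      intro j _
      rw [filter_blk_eq lam hsum x j]
    · funext j
      rw [quotPart_eq, sum01_eq_card x h01]
  · rintro ⟨μ, ⟨hle, hs⟩, rfl⟩
    set x : Fin (n+1) → ℝ := fun t =>
      if t.1 < Spre lam (blk lam hsum t).1 + μ (blk lam hsum t) then 1 else 0 with hx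
    have h01 : ∀ t, x t = 0 ∨ x t = 1 := by
      intro t; rw [hx]; dsimp only; split_ifs <;> simp
    have hones : ∀ j : Fin l, (Block lam j).filter (fun t => x t = 1) =
        Finset.univ.filter (fun t : Fin (n+1) =>
          Spre lam j.1 ≤ t.1 ∧ t.1 < Spre lam j.1 + μ j) := by
      intro j
      have hsucc := Spre_succ lam j.1 j.2
      simp only [Fin.eta] at hsucc
      ext t
      simp only [Finset.mem_filter, Finset.mem_univ, true_and, Block]
      constructor
      · rintro ⟨hbl, hx1⟩
        have hbj : blk lam hsum t = j := (blk_eq_iff lam hsum t j).2 hbl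
        refine ⟨hbl.1, ?_⟩
        by_contra hcon
        push_neg at hcon
        have hneg : ¬ (t.1 < Spre lam (blk lam hsum t).1 + μ (blk lam hsum t)) := by
          rw [hbj]; omega
        have hx0 : x t = 0 := by
          rw [hx]; dsimp only; rw [if_neg hneg]
        rw [hx0] at hx1; norm_num at hx1
      · rintro ⟨h1, h2⟩
        have hblt : t.1 < Spre lam (j.1 + 1) := by
          have := hle j
          omega
        have hbj : blk lam hsum t = j := (blk_eq_iff lam hsum t j).2 ⟨h1, hblt⟩
        refine ⟨⟨h1, hblt⟩, ?_⟩
        have hpos : t.1 < Spre lam (blk lam hsum t).1 + μ (blk lam hsum t) := by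
          rw [hbj]; omega
        rw [hx]; dsimp only; rw [if_pos hpos]
    have hcnt : ∀ j : Fin l, ((Block lam j).filter (fun t => x t = 1)).card = μ j := by
      intro j
      rw [hones j]
      have hsucc := Spre_succ lam j.1 j.2
      simp only [Fin.eta] at hsucc
      have hb : Spre lam j.1 + μ j ≤ n + 1 := by
        have h2 : Spre lam (j.1+1) ≤ n + 1 := by
          rw [← hsum, ← Spre_top lam (le_refl l)]; exact Spre_mono lam j.2
        have := hle j
        omega
      rw [finCardFilterIco _ _ hb]
      omega
    refine ⟨x, ⟨h01, ?_⟩, ?_⟩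
    · rw [Finset.card_eq_sum_card_fiberwise
        (f := blk lam hsum) (t := Finset.univ) (fun t _ => Finset.mem_univ _)]
      rw [← hs]
      apply Finset.sum_congr rfl
      intro j _
      rw [filter_blk_eq lam hsum x j, hcnt j]
    · funext j
      rw [quotPart_eq, sum01_eq_card x h01, hcnt j]

/-- for `a = (1,…,1,0,…,0)` with `i` ones and a partition
`λ ⊢ n+1`, the number of points of `quot_λ(Π(a) ∩ ℤ^{n+1})` equals the number of
compositions `(μ_1, …, μ_{ℓ(λ)})` of `i` fitting inside the Young diagram of `λ`. -/
theorem typeA_minuscule_quot_count (n i : ℕ) (hi1 : 1 ≤ i) (hi2 : i ≤ n + 1)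
    (l : ℕ) (lam : Fin l → ℕ) (hpos : ∀ j, 0 < lam j) (hanti : Antitone lam)
    (hsum : ∑ j, lam j = n + 1) :
    (quotPart l lam ''
        (permA (fun t : Fin (n + 1) => if (t : ℕ) < i then (1 : ℝ) else 0) ∩
          intLattice (n + 1))).ncard =
      {μ : Fin l → ℕ | (∀ j, μ j ≤ lam j) ∧ ∑ j, μ j = i}.ncard := by
  rw [image_eq hi2 lam hpos hsum]
  apply Set.ncard_image_of_injective
  intro μ ν h
  funext j
  have h2 := congrFun h j
  simp only at h2
  exact_mod_cast h2
end
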